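/- arXiv:0805.0099 — 9 statements merged into one kernel-verified Lean document; each statement's English description precedes it below -/
import Mathlib

section
/- Let ρ(θ) = Σ_k p_k(θ)|w_k(θ)⟩⟨w_k(θ)| be a smooth one-parameter family of density matrices with p_k(θ) > 0 and orthonormal eigenvectors. Then C_L(θ) − H_{SLD}(θ) = 16 Σ_{j<k} (p_j p_k)/(p_j + p_k) |⟨w_j'|w_k⟩|^2 ≥ 0, where H_{SLD}(θ) = Σ_k (p_k')^2/p_k + 4 Σ_{j<k} (p_j − p_k)^2/(p_j + p_k) |⟨w_j'|w_k⟩|^2 and C_L(θ) = Σ_i (p_i')^2/p_i + 4 Σ_{j<k} (p_j + p_k)|⟨w_j'|w_k⟩|^2. -/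
open scoped BigOperators

/-- For a smooth one-parameter family of density matrices with spectral decomposition
`ρ(θ) = Σ_k p_k(θ)|w_k(θ)⟩⟨w_k(θ)|`,
`C_L(θ) − H_{SLD}(θ) = 16 Σ_{j<k} p_j p_k/(p_j+p_k) |⟨w_j'|w_k⟩|² ≥ 0`. -/
theorem CL_sub_HSLD_one_param
    {d : ℕ} (p : Fin d → ℝ → ℝ) (w : Fin d → ℝ → EuclideanSpace ℂ (Fin d)) (θ : ℝ)
    (hp : ∀ i, 0 < p i θ)
    (hpd : ∀ i, Differentiable ℝ (p i))
    (hwd : ∀ i, Differentiable ℝ (w i))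
    (hON : ∀ t : ℝ, Orthonormal ℂ (fun i => w i t)) :
    let H : ℝ := (∑ k, (deriv (p k) θ) ^ 2 / p k θ)
      + 4 * ∑ j, ∑ k, (if j < k then ((p j θ - p k θ) ^ 2 / (p j θ + p k θ)) *
          ‖(inner ℂ (deriv (w j) θ) (w k θ) : ℂ)‖ ^ 2 else 0)
    let CL : ℝ := (∑ i, (deriv (p i) θ) ^ 2 / p i θ)
      + 4 * ∑ j, ∑ k, (if j < k then (p j θ + p k θ) *
          ‖(inner ℂ (deriv (w j) θ) (w k θ) : ℂ)‖ ^ 2 else 0)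
    CL - H = 16 * ∑ j, ∑ k, (if j < k then (p j θ * p k θ / (p j θ + p k θ)) *
        ‖(inner ℂ (deriv (w j) θ) (w k θ) : ℂ)‖ ^ 2 else 0) ∧
    H ≤ CL := by
  intro H CL
  set X : Fin d → Fin d → ℝ :=
    fun j k => ‖(inner ℂ (deriv (w j) θ) (w k θ) : ℂ)‖ ^ 2 with hX
  have hterm : ∀ j k : Fin d,
      (16:ℝ) * (if j < k then (p j θ * p k θ / (p j θ + p k θ)) * X j k else 0)
      = 4 * (if j < k then (p j θ + p k θ) * X j k else 0)
        - 4 * (if j < k then ((p j θ - p k θ) ^ 2 / (p j θ + p k θ)) * X j k else 0) := by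
    intro j k
    by_cases h : j < k
    · simp only [h, if_pos]
      have hjk : p j θ + p k θ ≠ 0 := by have := hp j; have := hp k; positivity
      field_simp
      ring
    · simp [h]
  set A : ℝ := ∑ j, ∑ k, (if j < k then ((p j θ - p k θ) ^ 2 / (p j θ + p k θ)) * X j k else 0)
    with hA
  set B : ℝ := ∑ j, ∑ k, (if j < k then (p j θ + p k θ) * X j k else 0) with hB
  set C : ℝ := ∑ j, ∑ k, (if j < k then (p j θ * p k θ / (p j θ + p k θ)) * X j k else 0)
    with hC
  have h16 : 16 * C = 4 * B - 4 * A := by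
    rw [hA, hB, hC, Finset.mul_sum, Finset.mul_sum, Finset.mul_sum,
      ← Finset.sum_sub_distrib]
    refine Finset.sum_congr rfl fun j _ => ?_
    rw [Finset.mul_sum, Finset.mul_sum, Finset.mul_sum, ← Finset.sum_sub_distrib]
    exact Finset.sum_congr rfl fun k _ => hterm j k
  have hCnn : 0 ≤ C := by
    rw [hC]
    refine Finset.sum_nonneg fun j _ => Finset.sum_nonneg fun k _ => ?_
    by_cases h : j < k
    · simp only [h, if_pos]
      have := hp j; have := hp k
      have hXnn : 0 ≤ X j k := by rw [hX]; positivity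
      positivity
    · simp [h]
  have hkey : CL - H = 16 * C := by
    simp only [CL, H]
    linarith [h16]
  exact ⟨hkey, by linarith⟩
end

section
/- For a smooth one-parameter family of density matrices ρ(θ) = Σ_k p_k(θ)|w_k(θ)⟩⟨w_k(θ)| with p_k > 0, equality H_{SLD}(θ) = C_L(θ) holds if and only if ⟨w_j'(θ)|w_k(θ)⟩ = 0 for all j ≠ k. -/
open scoped BigOperators

/-- For a smooth one-parameter family of density matrices with spectral decomposition
`ρ(θ) = Σ_k p_k(θ)|w_k(θ)⟩⟨w_k(θ)|` with `p_k > 0`, equality `H_{SLD}(θ) = C_L(θ)`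
holds iff `⟨w_j'(θ)|w_k(θ)⟩ = 0` for all `j ≠ k`. -/
theorem HSLD_eq_CL_iff_one_param
    {d : ℕ} (p : Fin d → ℝ → ℝ) (w : Fin d → ℝ → EuclideanSpace ℂ (Fin d)) (θ : ℝ)
    (hp : ∀ i, 0 < p i θ)
    (hpd : ∀ i, Differentiable ℝ (p i))
    (hwd : ∀ i, Differentiable ℝ (w i))
    (hON : ∀ t : ℝ, Orthonormal ℂ (fun i => w i t)) :
    let H : ℝ := (∑ k, (deriv (p k) θ) ^ 2 / p k θ)
      + 4 * ∑ j, ∑ k, (if j < k then ((p j θ - p k θ) ^ 2 / (p j θ + p k θ)) *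
          ‖(inner ℂ (deriv (w j) θ) (w k θ) : ℂ)‖ ^ 2 else 0)
    let CL : ℝ := (∑ i, (deriv (p i) θ) ^ 2 / p i θ)
      + 4 * ∑ j, ∑ k, (if j < k then (p j θ + p k θ) *
          ‖(inner ℂ (deriv (w j) θ) (w k θ) : ℂ)‖ ^ 2 else 0)
    (H = CL ↔ ∀ j k, j ≠ k → (inner ℂ (deriv (w j) θ) (w k θ) : ℂ) = 0) := by
  intro H CL
  -- symmetry: inner ℂ (w j)' (w k) = - conj (inner ℂ (w k)' (w j)) for j ≠ k
  have hsym : ∀ j k : Fin d, j ≠ k →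
      (inner ℂ (deriv (w j) θ) (w k θ) : ℂ)
        = - (starRingEnd ℂ) (inner ℂ (deriv (w k) θ) (w j θ)) := by
    intro j k hjk
    have hconst : (fun t : ℝ => (inner ℂ (w j t) (w k t) : ℂ)) = fun _ => 0 := by
      funext t
      simpa [hjk] using (hON t).2 (i := j) (j := k) hjk
    have h1 : HasDerivAt (fun t : ℝ => (inner ℂ (w j t) (w k t) : ℂ))
        ((inner ℂ (w j θ) (deriv (w k) θ) : ℂ) + inner ℂ (deriv (w j) θ) (w k θ)) θ :=
      HasDerivAt.inner ℂ ((hwd j θ).hasDerivAt) ((hwd k θ).hasDerivAt)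
    have h2 : HasDerivAt (fun t : ℝ => (inner ℂ (w j t) (w k t) : ℂ)) 0 θ := by
      rw [hconst]; exact hasDerivAt_const θ 0
    have h0 : (inner ℂ (w j θ) (deriv (w k) θ) : ℂ) + inner ℂ (deriv (w j) θ) (w k θ) = 0 :=
      h1.unique h2
    rw [inner_conj_symm]
    linear_combination h0
  set A : Fin d → Fin d → ℝ :=
    fun j k => ‖(inner ℂ (deriv (w j) θ) (w k θ) : ℂ)‖ ^ 2 with hA
  have hAnn : ∀ j k, 0 ≤ A j k := fun j k => by positivity
  have hcoef : ∀ j k : Fin d,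
      0 < (p j θ + p k θ) - (p j θ - p k θ) ^ 2 / (p j θ + p k θ) := by
    intro j k
    have hj := hp j; have hk := hp k
    rw [sub_pos, div_lt_iff₀ (by linarith)]
    nlinarith
  -- H = CL iff the difference sum is zero
  have hHC : H = CL ↔ (∑ j, ∑ k,
      (if j < k then ((p j θ + p k θ) - (p j θ - p k θ) ^ 2 / (p j θ + p k θ)) * A j k
        else 0)) = 0 := by
    have hsplit : ∀ j : Fin d,
        (∑ k, (if j < k then (p j θ + p k θ) * A j k else 0))
          - (∑ k, (if j < k then ((p j θ - p k θ) ^ 2 / (p j θ + p k θ)) * A j k else 0))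
        = ∑ k, (if j < k then
            ((p j θ + p k θ) - (p j θ - p k θ) ^ 2 / (p j θ + p k θ)) * A j k else 0) := by
      intro j
      rw [← Finset.sum_sub_distrib]
      refine Finset.sum_congr rfl fun k _ => ?_
      split <;> ring
    have hCLH : CL - H = 4 * ∑ j, ∑ k,
        (if j < k then ((p j θ + p k θ) - (p j θ - p k θ) ^ 2 / (p j θ + p k θ)) * A j k
          else 0) := by
      have : CL - H = 4 * ((∑ j, ∑ k, (if j < k then (p j θ + p k θ) * A j k else 0))
          - (∑ j, ∑ k, (if j < k then ((p j θ - p k θ) ^ 2 / (p j θ + p k θ)) * A j k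
              else 0))) := by
        simp only [H, CL, hA]; ring
      rw [this, ← Finset.sum_sub_distrib]
      rw [Finset.sum_congr rfl fun j _ => hsplit j]
    constructor
    · intro h
      have : CL - H = 0 := by rw [h]; ring
      rw [hCLH] at this; linarith
    · intro h
      have := hCLH; rw [h] at this; linarith
  rw [hHC]
  -- the sum of nonneg terms is zero iff each A j k = 0 for j < k
  have hnn : ∀ j k : Fin d, 0 ≤ (if j < k then
      ((p j θ + p k θ) - (p j θ - p k θ) ^ 2 / (p j θ + p k θ)) * A j k else 0) := by
    intro j k; split
    · exact mul_nonneg (hcoef j k).le (hAnn j k)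
    · exact le_refl 0
  constructor
  · intro hsum j k hjk
    have hall : ∀ j k : Fin d, j < k → A j k = 0 := by
      intro j k hlt
      have h1 : ∀ j ∈ Finset.univ, (∑ k, (if j < k then
          ((p j θ + p k θ) - (p j θ - p k θ) ^ 2 / (p j θ + p k θ)) * A j k else 0))
            = (0 : ℝ) := by
        rw [← Finset.sum_eq_zero_iff_of_nonneg
          (fun j _ => Finset.sum_nonneg fun k _ => hnn j k)]
        exact hsum
      have h2 := (Finset.sum_eq_zero_iff_of_nonneg
        (fun k _ => hnn j k)).mp (h1 j (Finset.mem_univ j)) k (Finset.mem_univ k)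
      rw [if_pos hlt] at h2
      exact (mul_eq_zero.mp h2).resolve_left (hcoef j k).ne'
    have hAzero : ∀ j k : Fin d, A j k = 0 →
        (inner ℂ (deriv (w j) θ) (w k θ) : ℂ) = 0 := by
      intro j k h
      have := pow_eq_zero_iff (n := 2) (by norm_num) |>.mp h
      exact norm_eq_zero.mp this
    rcases lt_or_gt_of_ne hjk with h | h
    · exact hAzero j k (hall j k h)
    · rw [hsym j k hjk, hAzero k j (hall k j h), map_zero, neg_zero]
  · intro hz
    refine Finset.sum_eq_zero fun j _ => Finset.sum_eq_zero fun k _ => ?_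
    split
    · next h =>
      have : A j k = 0 := by rw [hA]; simp [hz j k h.ne]
      rw [this, mul_zero]
    · rfl
end

section
/- Let |w(θ)⟩ be a smooth curve of unit vectors in ℂ^d and α : ℝ → ℝ a smooth function; set |v(θ)⟩ = exp(i α(θ))|w(θ)⟩. Then |⟨v'(θ)|v(θ)⟩|^2 = |−i α'(θ) + ⟨w'(θ)|w(θ)⟩|^2; in particular, the term Σ_k p_k |⟨v_k'|v_k⟩|^2 appearing in C_Υ depends on the choice of phases α_k, so C_Υ is not invariant under phase changes of the eigenvectors. -/
/-- Under a phase change `|v(θ)⟩ = e^{iα(θ)}|w(θ)⟩` of a smooth curve of unit vectors,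
`|⟨v'(θ)|v(θ)⟩|² = |−i α'(θ) + ⟨w'(θ)|w(θ)⟩|²`; hence the term
`Σ_k p_k |⟨v_k'|v_k⟩|²` in `C_Υ` depends on the choice of phases. -/
theorem inner_deriv_self_phase_dependence
    {d : ℕ} (w : ℝ → EuclideanSpace ℂ (Fin d)) (α : ℝ → ℝ)
    (hw : Differentiable ℝ w) (hα : Differentiable ℝ α)
    (hunit : ∀ θ, ‖w θ‖ = 1)
    (v : ℝ → EuclideanSpace ℂ (Fin d))
    (hv : ∀ θ, v θ = Complex.exp (Complex.I * (α θ : ℂ)) • w θ) :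
    ∀ θ : ℝ,
      ‖(inner ℂ (deriv v θ) (v θ) : ℂ)‖ ^ 2
        = ‖-Complex.I * Complex.ofReal (deriv α θ)
            + (inner ℂ (deriv w θ) (w θ) : ℂ)‖ ^ 2 := by
  intro θ
  have hveq : v = fun t => Complex.exp (Complex.I * (α t : ℂ)) • w t := funext hv
  have hwθ : HasDerivAt w (deriv w θ) θ := (hw θ).hasDerivAt
  have hαθ : HasDerivAt α (deriv α θ) θ := (hα θ).hasDerivAt
  have h1 : HasDerivAt (fun t : ℝ => (Complex.I * (α t : ℂ)))
      (Complex.I * (Complex.ofReal (deriv α θ))) θ := by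
    simpa using (hαθ.ofReal_comp).const_mul Complex.I
  have hf : HasDerivAt (fun t => Complex.exp (Complex.I * (α t : ℂ)))
      (Complex.exp (Complex.I * (α θ : ℂ)) * (Complex.I * (Complex.ofReal (deriv α θ)))) θ := h1.cexp
  have hvd : HasDerivAt v
      ((Complex.exp (Complex.I * (α θ : ℂ)) * (Complex.I * (Complex.ofReal (deriv α θ)))) • w θ
        + Complex.exp (Complex.I * (α θ : ℂ)) • deriv w θ) θ := by
    rw [hveq]
    rw [add_comm]; exact hf.smul hwθ
  have hdv : deriv v θ =
      (Complex.exp (Complex.I * (α θ : ℂ)) * (Complex.I * (Complex.ofReal (deriv α θ)))) • w θ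
        + Complex.exp (Complex.I * (α θ : ℂ)) • deriv w θ := hvd.deriv
  have hww : (inner ℂ (w θ) (w θ) : ℂ) = 1 := by
    rw [inner_self_eq_norm_sq_to_K, hunit θ]
    norm_num
  have hee : (starRingEnd ℂ) (Complex.exp (Complex.I * (α θ : ℂ)))
      * Complex.exp (Complex.I * (α θ : ℂ)) = 1 := by
    rw [← Complex.exp_conj, ← Complex.exp_add]
    simp [Complex.exp_eq_one_iff]
  have key : (inner ℂ (deriv v θ) (v θ) : ℂ)
      = -Complex.I * Complex.ofReal (deriv α θ) + (inner ℂ (deriv w θ) (w θ) : ℂ) := by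
    rw [hdv, hv θ, inner_add_left, inner_smul_left, inner_smul_left, inner_smul_right,
      inner_smul_right, hww]
    have hc : (starRingEnd ℂ) (Complex.exp (Complex.I * (α θ : ℂ)) * (Complex.I * (Complex.ofReal (deriv α θ))))
        = (starRingEnd ℂ) (Complex.exp (Complex.I * (α θ : ℂ))) * (-Complex.I * (Complex.ofReal (deriv α θ))) := by
      simp [map_mul]
    rw [hc]
    have := hee
    ring_nf
    ring_nf at this
    rw [mul_comm] at this ⊢
    calc _ = ((starRingEnd ℂ) (Complex.exp (Complex.I * (α θ : ℂ))) * Complex.exp (Complex.I * (α θ : ℂ)))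
            * (-Complex.I * (Complex.ofReal (deriv α θ)))
          + ((starRingEnd ℂ) (Complex.exp (Complex.I * (α θ : ℂ))) * Complex.exp (Complex.I * (α θ : ℂ)))
            * (inner ℂ (deriv w θ) (w θ) : ℂ) := by ring
      _ = _ := by rw [hee]; ring
  rw [key]
end

section
/- Let 0 < ε < 1/3 and 0 ≤ r < 1. For the family ρ(θ) = (1−2ε)|v_1⟩⟨v_1| + ε|v_2(θ)⟩⟨v_2(θ)| + ε|v_3(θ)⟩⟨v_3(θ)| (with |v_1⟩ = (1,0,0)^T, |v_2(θ)⟩ = (0,cos θ, sin θ)^T, |v_3(θ)⟩ = (0,−sin θ, cos θ)^T) and its image under the depolarizing channel E(ρ) = rρ + (1−r)/3 · I, one has C_L(E(ρ(θ))) − C_L(ρ(θ)) = (1−r)(8/3 − 8ε) > 0. Hence C_L strictly increases under this TP-CP map, so C_L is not a monotone metric. -/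
open scoped BigOperators

/-- For `0 < ε < 1/3` and `0 ≤ r < 1`, applying the depolarizing channel
`E(ρ) = rρ + ((1−r)/3)I` to the rotation family (eigenvalues `(1−2ε,ε,ε)` mapped to
`(r(1−2ε)+(1−r)/3, rε+(1−r)/3, rε+(1−r)/3)`, eigenvectors unchanged) increases the
`C_L` quantum information: `C_L(E(ρ(θ))) − C_L(ρ(θ)) = (1−r)(8/3 − 8ε) > 0`, so `C_L`
is not monotone under TP-CP maps. -/
theorem CL_not_monotone_depolarizing (ε r : ℝ)
    (hε0 : 0 < ε) (hε : ε < 1 / 3) (hr0 : 0 ≤ r) (hr : r < 1)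
    (p q : Fin 3 → ℝ)
    (hp : p = ![1 - 2 * ε, ε, ε])
    (hq : q = ![r * (1 - 2 * ε) + (1 - r) / 3, r * ε + (1 - r) / 3, r * ε + (1 - r) / 3])
    (v : Fin 3 → ℝ → Fin 3 → ℂ)
    (hv : ∀ θ : ℝ, v 0 θ = ![1, 0, 0] ∧
      v 1 θ = ![0, (Real.cos θ : ℂ), (Real.sin θ : ℂ)] ∧
      v 2 θ = ![0, (-(Real.sin θ) : ℂ), (Real.cos θ : ℂ)]) :
    ∀ θ : ℝ,
      let CL : (Fin 3 → ℝ) → ℝ := fun e =>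
        (∑ i, (deriv (fun _ : ℝ => e i) θ) ^ 2 / e i)
          + 4 * ∑ j, ∑ k, (if j < k then (e j + e k) *
              ‖∑ i, (starRingEnd ℂ) (deriv (fun t => v j t i) θ) * v k θ i‖ ^ 2
            else 0)
      CL q - CL p = (1 - r) * (8 / 3 - 8 * ε) ∧ 0 < CL q - CL p := by
  intro θ CL
  have hv0 : ∀ i, (fun t => v 0 t i) = fun _ : ℝ => (![1, 0, 0] : Fin 3 → ℂ) i :=
    fun i => funext fun t => by rw [(hv t).1]
  have hv1 : ∀ i, (fun t => v 1 t i)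
      = fun t : ℝ => (![0, (Real.cos t : ℂ), (Real.sin t : ℂ)] : Fin 3 → ℂ) i :=
    fun i => funext fun t => by rw [(hv t).2.1]
  have hv2 : ∀ i, (fun t => v 2 t i)
      = fun t : ℝ => (![0, (-(Real.sin t) : ℂ), (Real.cos t : ℂ)] : Fin 3 → ℂ) i :=
    fun i => funext fun t => by rw [(hv t).2.2]
  have dcos : deriv (fun t : ℝ => (Real.cos t : ℂ)) θ = -(Real.sin θ) := by
    have := ((Real.hasDerivAt_cos θ).ofReal_comp).deriv
    simpa using this
  have dsin : deriv (fun t : ℝ => (Real.sin t : ℂ)) θ = (Real.cos θ) := by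
    have := ((Real.hasDerivAt_sin θ).ofReal_comp).deriv
    simpa using this
  have dnsin : deriv (fun t : ℝ => (-(Real.sin t) : ℂ)) θ = -(Real.cos θ) := by
    have := (((Real.hasDerivAt_sin θ).neg).ofReal_comp).deriv
    simpa using this
  have key : ∀ e : Fin 3 → ℝ, CL e = 4 * (e 1 + e 2) := by
    intro e
    show (∑ i, (deriv (fun _ : ℝ => e i) θ) ^ 2 / e i)
          + 4 * ∑ j, ∑ k, (if j < k then (e j + e k) *
              ‖∑ i, (starRingEnd ℂ) (deriv (fun t => v j t i) θ) * v k θ i‖ ^ 2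
            else 0) = 4 * (e 1 + e 2)
    rw [Fin.sum_univ_three]
    simp only [Fin.sum_univ_three, deriv_const]
    simp only [hv0, hv1, hv2, (hv θ).1, (hv θ).2.1, (hv θ).2.2,
      Matrix.cons_val_zero, Matrix.cons_val_one, Matrix.head_cons,
      Matrix.cons_val_two, Matrix.tail_cons, dcos, dsin, dnsin, deriv_const',
      map_zero, zero_mul, mul_zero, add_zero, zero_add]
    simp only [show ¬((0:Fin 3) < 0) from by decide, show ((0:Fin 3) < 1) from by decide,
      show ((0:Fin 3) < 2) from by decide, show ¬((1:Fin 3) < 0) from by decide,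
      show ¬((1:Fin 3) < 1) from by decide, show ((1:Fin 3) < 2) from by decide,
      show ¬((2:Fin 3) < 0) from by decide, show ¬((2:Fin 3) < 1) from by decide,
      show ¬((2:Fin 3) < 2) from by decide, if_true, if_false]
    have habs : (starRingEnd ℂ) (-(Real.sin θ : ℂ)) * -(Real.sin θ : ℂ)
        + (starRingEnd ℂ) ((Real.cos θ : ℂ)) * (Real.cos θ : ℂ)
        = ((Real.sin θ ^ 2 + Real.cos θ ^ 2 : ℝ) : ℂ) := by
      rw [map_neg, Complex.conj_ofReal, Complex.conj_ofReal]
      push_cast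
      ring
    rw [habs, Real.sin_sq_add_cos_sq]
    norm_num
  rw [key p, key q, hp, hq]
  simp only [Matrix.cons_val_one, Matrix.head_cons, Matrix.cons_val_two, Matrix.tail_cons,
    Matrix.cons_val_zero]
  constructor
  · ring
  · nlinarith
end

section
/- For the one-parameter family of density matrices ρ(θ) = Σ_i p_i(θ)|w_i(θ)⟩⟨w_i(θ)| with unit eigenvectors, the C_L quantum information decomposes as C_L(θ) = Σ_i (p_i'(θ))^2/p_i(θ) + Σ_i p_i(θ) H_{SLD}(ρ_i(θ)), where H_{SLD}(ρ_i(θ)) = 4(⟨w_i'|w_i'⟩ − |⟨w_i'|w_i⟩|^2) is the SLD quantum information of the pure state ρ_i(θ) = |w_i(θ)⟩⟨w_i(θ)|. -/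
open scoped BigOperators

/-- `C_L` decomposes as the classical Fisher information of the eigenvalues plus the
`p_i`-weighted sum of the pure-state SLD informations
`H_{SLD}(ρ_i(θ)) = 4(⟨w_i'|w_i'⟩ − |⟨w_i'|w_i⟩|²)`. -/
theorem CL_decomposition
    {d : ℕ} (p : Fin d → ℝ → ℝ) (w : Fin d → ℝ → EuclideanSpace ℂ (Fin d)) (θ : ℝ)
    (hp : ∀ i, 0 < p i θ)
    (hpd : ∀ i, Differentiable ℝ (p i))
    (hwd : ∀ i, Differentiable ℝ (w i))
    (hON : ∀ t : ℝ, Orthonormal ℂ (fun i => w i t)) :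
    (∑ i, (deriv (p i) θ) ^ 2 / p i θ)
      + 4 * ∑ j, ∑ k, (if j < k then (p j θ + p k θ) *
          ‖(inner ℂ (deriv (w j) θ) (w k θ) : ℂ)‖ ^ 2 else 0)
    = (∑ i, (deriv (p i) θ) ^ 2 / p i θ)
      + ∑ i, p i θ * (4 * ((inner ℂ (deriv (w i) θ) (deriv (w i) θ) : ℂ).re
          - ‖(inner ℂ (deriv (w i) θ) (w i θ) : ℂ)‖ ^ 2)) := by
  rcases Nat.eq_zero_or_pos d with hd | hd
  · subst hd; simp
  congr 1
  set a : Fin d → Fin d → ℝ := fun j k =>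
    ‖(inner ℂ (deriv (w j) θ) (w k θ) : ℂ)‖ ^ 2 with ha
  -- antisymmetry relation from differentiating orthonormality
  have key : ∀ j k : Fin d, (inner ℂ (deriv (w j) θ) (w k θ) : ℂ)
      = - (starRingEnd ℂ) (inner ℂ (deriv (w k) θ) (w j θ) : ℂ) := by
    intro j k
    have hder : HasDerivAt (fun t => (inner ℂ (w j t) (w k t) : ℂ))
        ((inner ℂ (w j θ) (deriv (w k) θ) : ℂ) + (inner ℂ (deriv (w j) θ) (w k θ) : ℂ)) θ :=
      HasDerivAt.inner ℂ ((hwd j θ).hasDerivAt) ((hwd k θ).hasDerivAt)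
    have hconst : (fun t => (inner ℂ (w j t) (w k t) : ℂ))
        = fun _ => (if j = k then 1 else 0 : ℂ) := by
      funext t
      exact (orthonormal_iff_ite.mp (hON t)) j k
    rw [hconst] at hder
    have h0 : (inner ℂ (w j θ) (deriv (w k) θ) : ℂ) + (inner ℂ (deriv (w j) θ) (w k θ) : ℂ) = 0 :=
      hder.unique (hasDerivAt_const θ _)
    have hc : (inner ℂ (w j θ) (deriv (w k) θ) : ℂ)
        = (starRingEnd ℂ) (inner ℂ (deriv (w k) θ) (w j θ) : ℂ) :=
      (inner_conj_symm _ _).symm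
    linear_combination h0 - hc
  have hasym : ∀ j k : Fin d, a j k = a k j := by
    intro j k
    simp only [ha]
    rw [key j k, norm_neg, Complex.norm_conj]
  -- Parseval: the w i θ form an orthonormal basis
  haveI : Nonempty (Fin d) := Fin.pos_iff_nonempty.mp hd
  have hcard : Fintype.card (Fin d) = Module.finrank ℂ (EuclideanSpace ℂ (Fin d)) := by
    simp [finrank_euclideanSpace]
  let B : Module.Basis (Fin d) ℂ (EuclideanSpace ℂ (Fin d)) :=
    basisOfOrthonormalOfCardEqFinrank (hON θ) hcard
  have hB : ∀ i, B i = w i θ := fun i => by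
    simp [B, coe_basisOfOrthonormalOfCardEqFinrank]
  have hBON : Orthonormal ℂ (B : Fin d → EuclideanSpace ℂ (Fin d)) := by
    rw [orthonormal_iff_ite]
    intro i j
    rw [hB i, hB j]
    exact (orthonormal_iff_ite.mp (hON θ)) i j
  let ob : OrthonormalBasis (Fin d) ℂ (EuclideanSpace ℂ (Fin d)) := B.toOrthonormalBasis hBON
  have hob : ∀ i, ob i = w i θ := fun i => by
    simp [ob, Module.Basis.coe_toOrthonormalBasis, hB i]
  have parseval : ∀ i : Fin d,
      ∑ k, a i k = (inner ℂ (deriv (w i) θ) (deriv (w i) θ) : ℂ).re := by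
    intro i
    have hsum := ob.sum_inner_mul_inner (deriv (w i) θ) (deriv (w i) θ)
    have h2 : ∀ k, (inner ℂ (deriv (w i) θ) (ob k) : ℂ) * (inner ℂ (ob k) (deriv (w i) θ) : ℂ)
        = ((a i k : ℝ) : ℂ) := by
      intro k
      have hz : (inner ℂ (ob k) (deriv (w i) θ) : ℂ)
          = (starRingEnd ℂ) (inner ℂ (deriv (w i) θ) (ob k) : ℂ) := (inner_conj_symm _ _).symm
      rw [hz, Complex.mul_conj, hob k]
      simp [ha, Complex.sq_norm]
    rw [Finset.sum_congr rfl (fun k _ => h2 k)] at hsum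
    have := congrArg Complex.re hsum
    simpa using this
  -- rewrite LHS double sum
  have split : ∑ j, ∑ k, (if j < k then (p j θ + p k θ) * a j k else 0)
      = (∑ j, ∑ k, (if j < k then p j θ * a j k else 0))
      + (∑ j, ∑ k, (if j < k then p k θ * a j k else 0)) := by
    rw [← Finset.sum_add_distrib]
    refine Finset.sum_congr rfl fun j _ => ?_
    rw [← Finset.sum_add_distrib]
    refine Finset.sum_congr rfl fun k _ => ?_
    by_cases h : j < k <;> simp [h] <;> ring
  have swap : ∑ j, ∑ k, (if j < k then p k θ * a j k else 0)
      = ∑ j, ∑ k, (if k < j then p j θ * a j k else 0) := by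
    rw [Finset.sum_comm]
    refine Finset.sum_congr rfl fun j _ => Finset.sum_congr rfl fun k _ => ?_
    by_cases h : k < j <;> simp [h, hasym j k]
  have combine : ∑ j, ∑ k, (if j < k then (p j θ + p k θ) * a j k else 0)
      = ∑ j, p j θ * ((∑ k, a j k) - a j j) := by
    rw [split, swap, ← Finset.sum_add_distrib]
    refine Finset.sum_congr rfl fun j _ => ?_
    rw [← Finset.sum_add_distrib]
    have hpt : ∀ k, (if j < k then p j θ * a j k else 0) + (if k < j then p j θ * a j k else 0)
        = p j θ * a j k - (if j = k then p j θ * a j k else 0) := by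
      intro k
      rcases lt_trichotomy j k with h | h | h
      · simp [h, h.ne, not_lt_of_gt h]
      · simp [h]
      · simp [h, h.ne', not_lt_of_gt h]
    rw [Finset.sum_congr rfl fun k _ => hpt k, Finset.sum_sub_distrib,
      Finset.sum_ite_eq Finset.univ j (fun k => p j θ * a j k)]
    simp [Finset.mul_sum, mul_sub]
  rw [combine]
  rw [Finset.mul_sum]
  refine Finset.sum_congr rfl fun i _ => ?_
  rw [parseval i]
  ring
end

section
/- Consider the two-parameter family of eigenvectors |v_1(θ,φ)⟩ = (cos(θ/2) e^{−iφ/2}, sin(θ/2) e^{iφ/2})^T and |v_2(θ,φ)⟩ = (sin(θ/2) e^{−iφ/2}, −cos(θ/2) e^{iφ/2})^T. Then ⟨∂v_1/∂θ | ∂v_1/∂φ⟩ = (i/2) sin(θ/2) cos(θ/2) and ⟨∂v_2/∂θ | ∂v_2/∂φ⟩ = (−i/2) sin(θ/2) cos(θ/2); in particular these inner products are not real for θ not a multiple of π. -/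
open scoped BigOperators

lemma hexp (c : ℂ) (x : ℝ) :
    HasDerivAt (fun s : ℝ => Complex.exp (c * s)) (c * Complex.exp (c * x)) x := by
  have h : HasDerivAt (fun s : ℝ => c * (s : ℂ)) c x := by
    simpa using (Complex.ofRealCLM.hasDerivAt (x := x)).const_mul c
  simpa [mul_comm] using h.cexp

lemma hcos (θ : ℝ) :
    HasDerivAt (fun t : ℝ => ((Real.cos (t / 2) : ℝ) : ℂ))
      ((-Real.sin (θ / 2) / 2 : ℝ) : ℂ) θ := by
  have h : HasDerivAt (fun t : ℝ => Real.cos (t / 2)) (-Real.sin (θ / 2) / 2) θ := by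
    have := (Real.hasDerivAt_cos (θ / 2)).comp θ ((hasDerivAt_id θ).div_const 2)
    simpa [Function.comp_def, div_eq_mul_inv, neg_mul] using this
  exact h.ofReal_comp

lemma hsin (θ : ℝ) :
    HasDerivAt (fun t : ℝ => ((Real.sin (t / 2) : ℝ) : ℂ))
      ((Real.cos (θ / 2) / 2 : ℝ) : ℂ) θ := by
  have h : HasDerivAt (fun t : ℝ => Real.sin (t / 2)) (Real.cos (θ / 2) / 2) θ := by
    have := (Real.hasDerivAt_sin (θ / 2)).comp θ ((hasDerivAt_id θ).div_const 2)
    simpa [Function.comp_def, div_eq_mul_inv, neg_mul] using this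
  exact h.ofReal_comp

lemma exp_pair1 (φ : ℝ) :
    Complex.exp (Complex.I * (φ:ℂ) / 2) * Complex.exp ((-Complex.I/2) * (φ:ℂ)) = 1 := by
  rw [← Complex.exp_add, show Complex.I * (φ:ℂ) / 2 + (-Complex.I/2) * (φ:ℂ) = 0 by ring,
    Complex.exp_zero]

lemma exp_pair2 (φ : ℝ) :
    Complex.exp (-Complex.I * (φ:ℂ) / 2) * Complex.exp ((Complex.I/2) * (φ:ℂ)) = 1 := by
  rw [← Complex.exp_add, show -Complex.I * (φ:ℂ) / 2 + (Complex.I/2) * (φ:ℂ) = 0 by ring,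
    Complex.exp_zero]

/-- For the Bloch eigenvectors `|v₁(θ,φ)⟩ = (cos(θ/2)e^{−iφ/2}, sin(θ/2)e^{iφ/2})ᵀ` and
`|v₂(θ,φ)⟩ = (sin(θ/2)e^{−iφ/2}, −cos(θ/2)e^{iφ/2})ᵀ`,
`⟨∂_θ v₁|∂_φ v₁⟩ = (i/2)sin(θ/2)cos(θ/2)` and `⟨∂_θ v₂|∂_φ v₂⟩ = (−i/2)sin(θ/2)cos(θ/2)`;
these are not real unless `θ` is a multiple of `π`. -/
theorem bloch_eigenvector_mixed_partials
    (v₁ v₂ : ℝ → ℝ → Fin 2 → ℂ)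
    (hv₁ : ∀ θ φ : ℝ, v₁ θ φ =
      ![(Real.cos (θ / 2) : ℂ) * Complex.exp (-Complex.I * (φ : ℂ) / 2),
        (Real.sin (θ / 2) : ℂ) * Complex.exp (Complex.I * (φ : ℂ) / 2)])
    (hv₂ : ∀ θ φ : ℝ, v₂ θ φ =
      ![(Real.sin (θ / 2) : ℂ) * Complex.exp (-Complex.I * (φ : ℂ) / 2),
        -(Real.cos (θ / 2) : ℂ) * Complex.exp (Complex.I * (φ : ℂ) / 2)]) :
    ∀ θ φ : ℝ,
      (∑ i, (starRingEnd ℂ) (deriv (fun t => v₁ t φ i) θ) * deriv (fun s => v₁ θ s i) φ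
        = (Complex.I / 2) * (Real.sin (θ / 2) : ℂ) * (Real.cos (θ / 2) : ℂ)) ∧
      (∑ i, (starRingEnd ℂ) (deriv (fun t => v₂ t φ i) θ) * deriv (fun s => v₂ θ s i) φ
        = (-Complex.I / 2) * (Real.sin (θ / 2) : ℂ) * (Real.cos (θ / 2) : ℂ)) ∧
      ((¬ ∃ n : ℤ, θ = n * Real.pi) →
        (∑ i, (starRingEnd ℂ) (deriv (fun t => v₁ t φ i) θ)
            * deriv (fun s => v₁ θ s i) φ).im ≠ 0) := by
  intro θ φ
  have hc : ∀ z : ℂ, (starRingEnd ℂ) (Complex.exp z) = Complex.exp ((starRingEnd ℂ) z) :=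
    fun z => (Complex.exp_conj z).symm
  have c1 : (starRingEnd ℂ) (-Complex.I * (φ:ℂ) / 2) = Complex.I * (φ:ℂ) / 2 := by
    simp [Complex.conj_ofNat]
  have c2 : (starRingEnd ℂ) (Complex.I * (φ:ℂ) / 2) = -Complex.I * (φ:ℂ) / 2 := by
    simp [Complex.conj_ofNat]
  have e10 : deriv (fun t => v₁ t φ 0) θ
      = ((-Real.sin (θ / 2) / 2 : ℝ) : ℂ) * Complex.exp (-Complex.I * (φ : ℂ) / 2) := by
    have h : (fun t => v₁ t φ 0)
        = fun t : ℝ => ((Real.cos (t / 2) : ℝ) : ℂ) * Complex.exp (-Complex.I * (φ : ℂ) / 2) := by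
      funext t; rw [hv₁]; simp
    rw [h]; exact ((hcos θ).mul_const _).deriv
  have e11 : deriv (fun t => v₁ t φ 1) θ
      = ((Real.cos (θ / 2) / 2 : ℝ) : ℂ) * Complex.exp (Complex.I * (φ : ℂ) / 2) := by
    have h : (fun t => v₁ t φ 1)
        = fun t : ℝ => ((Real.sin (t / 2) : ℝ) : ℂ) * Complex.exp (Complex.I * (φ : ℂ) / 2) := by
      funext t; rw [hv₁]; simp
    rw [h]; exact ((hsin θ).mul_const _).deriv
  have f10 : deriv (fun s => v₁ θ s 0) φ
      = (Real.cos (θ / 2) : ℂ) * ((-Complex.I / 2) * Complex.exp ((-Complex.I / 2) * (φ : ℂ))) := by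
    have h : (fun s => v₁ θ s 0)
        = fun s : ℝ => (Real.cos (θ / 2) : ℂ) * Complex.exp ((-Complex.I / 2) * (s : ℂ)) := by
      funext s; rw [hv₁]; simp only [Matrix.cons_val_zero]; ring_nf
    rw [h]; exact ((hexp (-Complex.I / 2) φ).const_mul _).deriv
  have f11 : deriv (fun s => v₁ θ s 1) φ
      = (Real.sin (θ / 2) : ℂ) * ((Complex.I / 2) * Complex.exp ((Complex.I / 2) * (φ : ℂ))) := by
    have h : (fun s => v₁ θ s 1)
        = fun s : ℝ => (Real.sin (θ / 2) : ℂ) * Complex.exp ((Complex.I / 2) * (s : ℂ)) := by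
      funext s; rw [hv₁]; simp only [Matrix.cons_val_one, Matrix.head_cons, Matrix.cons_val_zero]; ring_nf
    rw [h]; exact ((hexp (Complex.I / 2) φ).const_mul _).deriv
  have key1 : ∑ i, (starRingEnd ℂ) (deriv (fun t => v₁ t φ i) θ) * deriv (fun s => v₁ θ s i) φ
      = (Complex.I / 2) * (Real.sin (θ / 2) : ℂ) * (Real.cos (θ / 2) : ℂ) := by
    rw [Fin.sum_univ_two, e10, e11, f10, f11]
    simp only [map_mul, Complex.conj_ofReal, hc, c1, c2]
    calc ((-Real.sin (θ / 2) / 2 : ℝ) : ℂ) * Complex.exp (Complex.I * (φ:ℂ) / 2) *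
          ((Real.cos (θ / 2) : ℂ) * (-Complex.I / 2 * Complex.exp (-Complex.I / 2 * (φ:ℂ)))) +
        ((Real.cos (θ / 2) / 2 : ℝ) : ℂ) * Complex.exp (-Complex.I * (φ:ℂ) / 2) *
          ((Real.sin (θ / 2) : ℂ) * (Complex.I / 2 * Complex.exp (Complex.I / 2 * (φ:ℂ))))
        = ((-Real.sin (θ / 2) / 2 : ℝ) : ℂ) * ((Real.cos (θ / 2) : ℂ) * (-Complex.I / 2)) *
            (Complex.exp (Complex.I * (φ:ℂ) / 2) * Complex.exp (-Complex.I / 2 * (φ:ℂ))) +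
          ((Real.cos (θ / 2) / 2 : ℝ) : ℂ) * ((Real.sin (θ / 2) : ℂ) * (Complex.I / 2)) *
            (Complex.exp (-Complex.I * (φ:ℂ) / 2) * Complex.exp (Complex.I / 2 * (φ:ℂ))) := by
          ring_nf
      _ = (Complex.I / 2) * (Real.sin (θ / 2) : ℂ) * (Real.cos (θ / 2) : ℂ) := by
          rw [exp_pair1, exp_pair2]; push_cast; ring
  have e20 : deriv (fun t => v₂ t φ 0) θ
      = ((Real.cos (θ / 2) / 2 : ℝ) : ℂ) * Complex.exp (-Complex.I * (φ : ℂ) / 2) := by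
    have h : (fun t => v₂ t φ 0)
        = fun t : ℝ => ((Real.sin (t / 2) : ℝ) : ℂ) * Complex.exp (-Complex.I * (φ : ℂ) / 2) := by
      funext t; rw [hv₂]; simp
    rw [h]; exact ((hsin θ).mul_const _).deriv
  have e21 : deriv (fun t => v₂ t φ 1) θ
      = -((-Real.sin (θ / 2) / 2 : ℝ) : ℂ) * Complex.exp (Complex.I * (φ : ℂ) / 2) := by
    have h : (fun t => v₂ t φ 1)
        = fun t : ℝ => -((Real.cos (t / 2) : ℝ) : ℂ) * Complex.exp (Complex.I * (φ : ℂ) / 2) := by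
      funext t; rw [hv₂]; simp
    rw [h]
    have := ((hcos θ).neg.mul_const (Complex.exp (Complex.I * (φ : ℂ) / 2))).deriv
    simpa using this
  have f20 : deriv (fun s => v₂ θ s 0) φ
      = (Real.sin (θ / 2) : ℂ) * ((-Complex.I / 2) * Complex.exp ((-Complex.I / 2) * (φ : ℂ))) := by
    have h : (fun s => v₂ θ s 0)
        = fun s : ℝ => (Real.sin (θ / 2) : ℂ) * Complex.exp ((-Complex.I / 2) * (s : ℂ)) := by
      funext s; rw [hv₂]; simp only [Matrix.cons_val_zero]; ring_nf
    rw [h]; exact ((hexp (-Complex.I / 2) φ).const_mul _).deriv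
  have f21 : deriv (fun s => v₂ θ s 1) φ
      = -(Real.cos (θ / 2) : ℂ) * ((Complex.I / 2) * Complex.exp ((Complex.I / 2) * (φ : ℂ))) := by
    have h : (fun s => v₂ θ s 1)
        = fun s : ℝ => -(Real.cos (θ / 2) : ℂ) * Complex.exp ((Complex.I / 2) * (s : ℂ)) := by
      funext s; rw [hv₂]; simp only [Matrix.cons_val_one, Matrix.head_cons, Matrix.cons_val_zero]; ring_nf
    rw [h]; exact ((hexp (Complex.I / 2) φ).const_mul _).deriv
  have key2 : ∑ i, (starRingEnd ℂ) (deriv (fun t => v₂ t φ i) θ) * deriv (fun s => v₂ θ s i) φ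
      = (-Complex.I / 2) * (Real.sin (θ / 2) : ℂ) * (Real.cos (θ / 2) : ℂ) := by
    rw [Fin.sum_univ_two, e20, e21, f20, f21]
    simp only [map_mul, map_neg, Complex.conj_ofReal, hc, c1, c2]
    calc ((Real.cos (θ / 2) / 2 : ℝ) : ℂ) * Complex.exp (Complex.I * (φ:ℂ) / 2) *
          ((Real.sin (θ / 2) : ℂ) * (-Complex.I / 2 * Complex.exp (-Complex.I / 2 * (φ:ℂ)))) +
        -((-Real.sin (θ / 2) / 2 : ℝ) : ℂ) * Complex.exp (-Complex.I * (φ:ℂ) / 2) *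
          (-(Real.cos (θ / 2) : ℂ) * (Complex.I / 2 * Complex.exp (Complex.I / 2 * (φ:ℂ))))
        = ((Real.cos (θ / 2) / 2 : ℝ) : ℂ) * ((Real.sin (θ / 2) : ℂ) * (-Complex.I / 2)) *
            (Complex.exp (Complex.I * (φ:ℂ) / 2) * Complex.exp (-Complex.I / 2 * (φ:ℂ))) +
          -((-Real.sin (θ / 2) / 2 : ℝ) : ℂ) * (-(Real.cos (θ / 2) : ℂ) * (Complex.I / 2)) *
            (Complex.exp (-Complex.I * (φ:ℂ) / 2) * Complex.exp (Complex.I / 2 * (φ:ℂ))) := by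
          ring_nf
      _ = (-Complex.I / 2) * (Real.sin (θ / 2) : ℂ) * (Real.cos (θ / 2) : ℂ) := by
          rw [exp_pair1, exp_pair2]; push_cast; ring
  refine ⟨key1, key2, ?_⟩
  intro hn
  rw [key1]
  have him : ((Complex.I / 2) * (Real.sin (θ / 2) : ℂ) * (Real.cos (θ / 2) : ℂ)).im
      = Real.sin (θ / 2) * Real.cos (θ / 2) / 2 := by
    rw [show (Complex.I / 2) * (Real.sin (θ / 2) : ℂ) * (Real.cos (θ / 2) : ℂ)
        = ((Real.sin (θ / 2) * Real.cos (θ / 2) / 2 : ℝ) : ℂ) * Complex.I by push_cast; ring]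
    rw [Complex.mul_I_im, Complex.ofReal_re]
  rw [him]
  intro h0
  have hs : Real.sin θ = 0 := by
    have : Real.sin θ = 2 * (Real.sin (θ / 2) * Real.cos (θ / 2)) := by
      rw [show θ = 2 * (θ / 2) by ring, Real.sin_two_mul]; ring_nf
    rw [this]
    have : Real.sin (θ / 2) * Real.cos (θ / 2) = 0 := by linarith
    rw [this]; ring
  rcases Real.sin_eq_zero_iff.mp hs with ⟨n, hn'⟩
  exact hn ⟨n, hn'.symm⟩
end

section
/- For the family of qubit states ρ(r,θ,φ) = ½(I + r(sinθ cosφ, sinθ sinφ, cosθ)·σ) with 0 < r < 1, the Sarovar–Milburn quantum information computed from the eigenvectors |v_1⟩ = (cos(θ/2)e^{−iφ/2}, sin(θ/2)e^{iφ/2})^T, |v_2⟩ = (sin(θ/2)e^{−iφ/2}, −cos(θ/2)e^{iφ/2})^T in parameters (r,θ,φ) is the diagonal matrix diag(1/(1−r²), 1, 1), while computed from the phase-shifted eigenvectors e^{−iφ/2}|v_k⟩ it is diag(1/(1−r²), 1, 2+2r cosθ). Hence C_Υ depends on the choice of eigenvector phases. -/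
open scoped BigOperators

noncomputable def SMaux_prj (i : Fin 3) : (Fin 3 → ℝ) →L[ℝ] ℝ := ContinuousLinearMap.proj i

lemma SMaux_key (A B : ℝ → ℂ) (A' B' : ℂ) (x : Fin 3 → ℝ)
    (hA : HasDerivAt A A' (x 1)) (hB : HasDerivAt B B' (x 2)) (v : Fin 3 → ℝ) :
    fderiv ℝ (fun y : Fin 3 → ℝ => A (y 1) * B (y 2)) x v
      = (v 1 : ℂ) * (A' * B (x 2)) + (v 2 : ℂ) * (B' * A (x 1)) := by
  have h1 : HasFDerivAt (fun y : Fin 3 → ℝ => A (y 1))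
      (((1 : ℝ →L[ℝ] ℝ).smulRight A').comp (SMaux_prj 1)) x :=
    hA.hasFDerivAt.comp x (SMaux_prj 1).hasFDerivAt
  have h2 : HasFDerivAt (fun y : Fin 3 → ℝ => B (y 2))
      (((1 : ℝ →L[ℝ] ℝ).smulRight B').comp (SMaux_prj 2)) x :=
    hB.hasFDerivAt.comp x (SMaux_prj 2).hasFDerivAt
  rw [show (fun y : Fin 3 → ℝ => A (y 1) * B (y 2)) = (fun y => A (y 1)) * (fun y => B (y 2)) from rfl,
    (h1.mul h2).fderiv]
  simp [SMaux_prj, Complex.real_smul]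
  ring

lemma SMaux_dp_plus (x v : Fin 3 → ℝ) :
    fderiv ℝ (fun y : Fin 3 → ℝ => (1 + y 0) / 2) x v = v 0 / 2 := by
  have h0 : HasFDerivAt (fun y : Fin 3 → ℝ => y 0) (SMaux_prj 0) x :=
    (SMaux_prj 0).hasFDerivAt
  have h : HasFDerivAt (fun y : Fin 3 → ℝ => (1 + y 0) / 2)
      ((2:ℝ)⁻¹ • SMaux_prj 0) x := by
    have h1 := (h0.const_add 1).const_smul (2:ℝ)⁻¹
    have h2 : (fun y : Fin 3 → ℝ => (1 + y 0) / 2) = fun y => (2:ℝ)⁻¹ • (1 + y 0) := by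
      funext y; simp [smul_eq_mul]; ring
    rw [h2]; exact h1
  rw [h.fderiv]
  simp [SMaux_prj]
  ring

lemma SMaux_dp_minus (x v : Fin 3 → ℝ) :
    fderiv ℝ (fun y : Fin 3 → ℝ => (1 - y 0) / 2) x v = -(v 0) / 2 := by
  have h0 : HasFDerivAt (fun y : Fin 3 → ℝ => y 0) (SMaux_prj 0) x :=
    (SMaux_prj 0).hasFDerivAt
  have h : HasFDerivAt (fun y : Fin 3 → ℝ => (1 - y 0) / 2)
      ((2:ℝ)⁻¹ • -SMaux_prj 0) x := by
    have h1 := (h0.const_sub 1).const_smul (2:ℝ)⁻¹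
    have h2 : (fun y : Fin 3 → ℝ => (1 - y 0) / 2) = fun y => (2:ℝ)⁻¹ • (1 - y 0) := by
      funext y; simp [smul_eq_mul]; ring
    rw [h2]; exact h1
  rw [h.fderiv]
  simp [SMaux_prj]
  ring

set_option maxHeartbeats 2000000 in
/-- For the Bloch family `ρ(r,θ,φ)` with eigenvalues `(1±r)/2`, the Sarovar–Milburn
information matrix in parameters `(r,θ,φ)` is `diag(1/(1−r²),1,1)` for the eigenvectors
`|v₁⟩,|v₂⟩` and `diag(1/(1−r²),1,2+2r cos θ)` for the phase-shifted eigenvectors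
`e^{−iφ/2}|v_k⟩`: `C_Υ` depends on the choice of eigenvector phases. -/
theorem SM_info_phase_dependent_qubit
    (p : Fin 2 → (Fin 3 → ℝ) → ℝ)
    (hp : ∀ x, p 0 x = (1 + x 0) / 2 ∧ p 1 x = (1 - x 0) / 2)
    (wA wB : Fin 2 → (Fin 3 → ℝ) → Fin 2 → ℂ)
    (hwA : ∀ x : Fin 3 → ℝ,
      wA 0 x = ![(Real.cos (x 1 / 2) : ℂ) * Complex.exp (-Complex.I * (x 2 : ℂ) / 2),
                 (Real.sin (x 1 / 2) : ℂ) * Complex.exp (Complex.I * (x 2 : ℂ) / 2)] ∧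
      wA 1 x = ![(Real.sin (x 1 / 2) : ℂ) * Complex.exp (-Complex.I * (x 2 : ℂ) / 2),
                 -(Real.cos (x 1 / 2) : ℂ) * Complex.exp (Complex.I * (x 2 : ℂ) / 2)])
    (hwB : ∀ (i : Fin 2) (x : Fin 3 → ℝ),
      wB i x = fun a => Complex.exp (-Complex.I * (x 2 : ℂ) / 2) * wA i x a) :
    let pd : Fin 3 → ((Fin 3 → ℝ) → Fin 2 → ℂ) → (Fin 3 → ℝ) → Fin 2 → ℂ :=
      fun k f x a => fderiv ℝ (fun y => f y a) x (Pi.single k 1)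
    let CU : (Fin 2 → (Fin 3 → ℝ) → Fin 2 → ℂ) → (Fin 3 → ℝ) → Fin 3 → Fin 3 → ℝ :=
      fun u x k l =>
        (∑ i, (fderiv ℝ (p i) x (Pi.single k 1)) * (fderiv ℝ (p i) x (Pi.single l 1))
            / p i x)
        + 4 * (∑ i, ∑ j, if i < j then (p i x + p j x) *
              ((∑ a, (starRingEnd ℂ) (pd k (u i) x a) * u j x a)
                * (∑ a, (starRingEnd ℂ) (u j x a) * pd l (u i) x a)) else 0).re
        + 4 * (∑ i, (p i x : ℂ) *
              ((∑ a, (starRingEnd ℂ) (pd k (u i) x a) * u i x a)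
                * (∑ a, (starRingEnd ℂ) (u i x a) * pd l (u i) x a))).re
    ∀ x : Fin 3 → ℝ, 0 < x 0 → x 0 < 1 →
      (∀ k l, CU wA x k l =
        ![![1 / (1 - (x 0) ^ 2), 0, 0], ![0, 1, 0], ![0, 0, 1]] k l) ∧
      (∀ k l, CU wB x k l =
        ![![1 / (1 - (x 0) ^ 2), 0, 0], ![0, 1, 0],
          ![0, 0, 2 + 2 * x 0 * Real.cos (x 1)]] k l) := by
  intro pd CU x hr0 hr1
  -- basic one-variable derivative facts
  have hAc : HasDerivAt (fun t : ℝ => ((Real.cos (t / 2) : ℝ) : ℂ))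
      (↑(-Real.sin (x 1 / 2) * (1 / 2))) (x 1) :=
    (((Real.hasDerivAt_cos (x 1 / 2)).comp (x 1) (h := fun t : ℝ => t / 2)
      ((hasDerivAt_id' (x 1)).div_const 2))).ofReal_comp
  have hAs : HasDerivAt (fun t : ℝ => ((Real.sin (t / 2) : ℝ) : ℂ))
      (↑(Real.cos (x 1 / 2) * (1 / 2))) (x 1) :=
    (((Real.hasDerivAt_sin (x 1 / 2)).comp (x 1) (h := fun t : ℝ => t / 2)
      ((hasDerivAt_id' (x 1)).div_const 2))).ofReal_comp
  have hre : HasDerivAt (fun t : ℝ => (t : ℂ)) 1 (x 2) := by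
    simpa using (hasDerivAt_id (x 2)).ofReal_comp
  have hEarg : HasDerivAt (fun t : ℝ => -Complex.I * (t : ℂ) / 2) (-Complex.I / 2) (x 2) := by
    simpa using (HasDerivAt.const_mul (-Complex.I) hre).div_const 2
  have hFarg : HasDerivAt (fun t : ℝ => Complex.I * (t : ℂ) / 2) (Complex.I / 2) (x 2) := by
    simpa using (HasDerivAt.const_mul Complex.I hre).div_const 2
  have hEd : HasDerivAt (fun t : ℝ => Complex.exp (-Complex.I * (t : ℂ) / 2))
      (Complex.exp (-Complex.I * ((x 2 : ℝ) : ℂ) / 2) * (-Complex.I / 2)) (x 2) := hEarg.cexp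
  have hFd : HasDerivAt (fun t : ℝ => Complex.exp (Complex.I * (t : ℂ) / 2))
      (Complex.exp (Complex.I * ((x 2 : ℝ) : ℂ) / 2) * (Complex.I / 2)) (x 2) := hFarg.cexp
  -- fderiv of the eigenvector components, choice A
  have dA00 : ∀ v : Fin 3 → ℝ, fderiv ℝ (fun y : Fin 3 → ℝ => wA 0 y 0) x v
      = (v 1 : ℂ) * (↑(-Real.sin (x 1 / 2) * (1 / 2)) * Complex.exp (-Complex.I * (x 2 : ℂ) / 2))
        + (v 2 : ℂ) * ((Complex.exp (-Complex.I * (x 2 : ℂ) / 2) * (-Complex.I / 2))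
            * ↑(Real.cos (x 1 / 2))) := by
    intro v
    have e : (fun y : Fin 3 → ℝ => wA 0 y 0)
        = fun y : Fin 3 → ℝ => ((Real.cos (y 1 / 2) : ℝ) : ℂ)
            * Complex.exp (-Complex.I * (y 2 : ℂ) / 2) := by
      funext y; rw [(hwA y).1]; simp
    rw [e]
    exact SMaux_key (fun t : ℝ => ((Real.cos (t / 2) : ℝ) : ℂ))
      (fun t : ℝ => Complex.exp (-Complex.I * (t : ℂ) / 2)) _ _ x hAc hEd v
  have dA01 : ∀ v : Fin 3 → ℝ, fderiv ℝ (fun y : Fin 3 → ℝ => wA 0 y 1) x v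
      = (v 1 : ℂ) * (↑(Real.cos (x 1 / 2) * (1 / 2)) * Complex.exp (Complex.I * (x 2 : ℂ) / 2))
        + (v 2 : ℂ) * ((Complex.exp (Complex.I * (x 2 : ℂ) / 2) * (Complex.I / 2))
            * ↑(Real.sin (x 1 / 2))) := by
    intro v
    have e : (fun y : Fin 3 → ℝ => wA 0 y 1)
        = fun y : Fin 3 → ℝ => ((Real.sin (y 1 / 2) : ℝ) : ℂ)
            * Complex.exp (Complex.I * (y 2 : ℂ) / 2) := by
      funext y; rw [(hwA y).1]; simp
    rw [e]
    exact SMaux_key (fun t : ℝ => ((Real.sin (t / 2) : ℝ) : ℂ))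
      (fun t : ℝ => Complex.exp (Complex.I * (t : ℂ) / 2)) _ _ x hAs hFd v
  have dA10 : ∀ v : Fin 3 → ℝ, fderiv ℝ (fun y : Fin 3 → ℝ => wA 1 y 0) x v
      = (v 1 : ℂ) * (↑(Real.cos (x 1 / 2) * (1 / 2)) * Complex.exp (-Complex.I * (x 2 : ℂ) / 2))
        + (v 2 : ℂ) * ((Complex.exp (-Complex.I * (x 2 : ℂ) / 2) * (-Complex.I / 2))
            * ↑(Real.sin (x 1 / 2))) := by
    intro v
    have e : (fun y : Fin 3 → ℝ => wA 1 y 0)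
        = fun y : Fin 3 → ℝ => ((Real.sin (y 1 / 2) : ℝ) : ℂ)
            * Complex.exp (-Complex.I * (y 2 : ℂ) / 2) := by
      funext y; rw [(hwA y).2]; simp
    rw [e]
    exact SMaux_key (fun t : ℝ => ((Real.sin (t / 2) : ℝ) : ℂ))
      (fun t : ℝ => Complex.exp (-Complex.I * (t : ℂ) / 2)) _ _ x hAs hEd v
  have dA11 : ∀ v : Fin 3 → ℝ, fderiv ℝ (fun y : Fin 3 → ℝ => wA 1 y 1) x v
      = (v 1 : ℂ) * (-↑(-Real.sin (x 1 / 2) * (1 / 2)) * Complex.exp (Complex.I * (x 2 : ℂ) / 2))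
        + (v 2 : ℂ) * ((Complex.exp (Complex.I * (x 2 : ℂ) / 2) * (Complex.I / 2))
            * -↑(Real.cos (x 1 / 2))) := by
    intro v
    have e : (fun y : Fin 3 → ℝ => wA 1 y 1)
        = fun y : Fin 3 → ℝ => (-((Real.cos (y 1 / 2) : ℝ) : ℂ))
            * Complex.exp (Complex.I * (y 2 : ℂ) / 2) := by
      funext y; rw [(hwA y).2]; simp
    rw [e]
    exact SMaux_key (fun t : ℝ => -((Real.cos (t / 2) : ℝ) : ℂ))
      (fun t : ℝ => Complex.exp (Complex.I * (t : ℂ) / 2)) _ _ x hAc.neg hFd v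
  -- fderiv of the eigenvector components, choice B
  have dB00 : ∀ v : Fin 3 → ℝ, fderiv ℝ (fun y : Fin 3 → ℝ => wB 0 y 0) x v
      = (v 1 : ℂ) * (↑(-Real.sin (x 1 / 2) * (1 / 2))
            * (Complex.exp (-Complex.I * (x 2 : ℂ) / 2) * Complex.exp (-Complex.I * (x 2 : ℂ) / 2)))
        + (v 2 : ℂ) * ((Complex.exp (-Complex.I * (x 2 : ℂ) / 2) * (-Complex.I / 2)
              * Complex.exp (-Complex.I * (x 2 : ℂ) / 2)
            + Complex.exp (-Complex.I * (x 2 : ℂ) / 2)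
              * (Complex.exp (-Complex.I * (x 2 : ℂ) / 2) * (-Complex.I / 2)))
            * ↑(Real.cos (x 1 / 2))) := by
    intro v
    have e : (fun y : Fin 3 → ℝ => wB 0 y 0)
        = fun y : Fin 3 → ℝ => ((Real.cos (y 1 / 2) : ℝ) : ℂ)
            * (Complex.exp (-Complex.I * (y 2 : ℂ) / 2) * Complex.exp (-Complex.I * (y 2 : ℂ) / 2)) := by
      funext y
      have h := congrFun (hwB 0 y) 0
      rw [h, (hwA y).1]; simp; ring
    rw [e]
    exact SMaux_key (fun t : ℝ => ((Real.cos (t / 2) : ℝ) : ℂ))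
      (fun t : ℝ => Complex.exp (-Complex.I * (t : ℂ) / 2) * Complex.exp (-Complex.I * (t : ℂ) / 2))
      _ _ x hAc (hEd.mul hEd) v
  have dB01 : ∀ v : Fin 3 → ℝ, fderiv ℝ (fun y : Fin 3 → ℝ => wB 0 y 1) x v
      = (v 1 : ℂ) * (↑(Real.cos (x 1 / 2) * (1 / 2))
            * (Complex.exp (-Complex.I * (x 2 : ℂ) / 2) * Complex.exp (Complex.I * (x 2 : ℂ) / 2)))
        + (v 2 : ℂ) * ((Complex.exp (-Complex.I * (x 2 : ℂ) / 2) * (-Complex.I / 2)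
              * Complex.exp (Complex.I * (x 2 : ℂ) / 2)
            + Complex.exp (-Complex.I * (x 2 : ℂ) / 2)
              * (Complex.exp (Complex.I * (x 2 : ℂ) / 2) * (Complex.I / 2)))
            * ↑(Real.sin (x 1 / 2))) := by
    intro v
    have e : (fun y : Fin 3 → ℝ => wB 0 y 1)
        = fun y : Fin 3 → ℝ => ((Real.sin (y 1 / 2) : ℝ) : ℂ)
            * (Complex.exp (-Complex.I * (y 2 : ℂ) / 2) * Complex.exp (Complex.I * (y 2 : ℂ) / 2)) := by
      funext y
      have h := congrFun (hwB 0 y) 1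
      rw [h, (hwA y).1]; simp; ring
    rw [e]
    exact SMaux_key (fun t : ℝ => ((Real.sin (t / 2) : ℝ) : ℂ))
      (fun t : ℝ => Complex.exp (-Complex.I * (t : ℂ) / 2) * Complex.exp (Complex.I * (t : ℂ) / 2))
      _ _ x hAs (hEd.mul hFd) v
  have dB10 : ∀ v : Fin 3 → ℝ, fderiv ℝ (fun y : Fin 3 → ℝ => wB 1 y 0) x v
      = (v 1 : ℂ) * (↑(Real.cos (x 1 / 2) * (1 / 2))
            * (Complex.exp (-Complex.I * (x 2 : ℂ) / 2) * Complex.exp (-Complex.I * (x 2 : ℂ) / 2)))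
        + (v 2 : ℂ) * ((Complex.exp (-Complex.I * (x 2 : ℂ) / 2) * (-Complex.I / 2)
              * Complex.exp (-Complex.I * (x 2 : ℂ) / 2)
            + Complex.exp (-Complex.I * (x 2 : ℂ) / 2)
              * (Complex.exp (-Complex.I * (x 2 : ℂ) / 2) * (-Complex.I / 2)))
            * ↑(Real.sin (x 1 / 2))) := by
    intro v
    have e : (fun y : Fin 3 → ℝ => wB 1 y 0)
        = fun y : Fin 3 → ℝ => ((Real.sin (y 1 / 2) : ℝ) : ℂ)
            * (Complex.exp (-Complex.I * (y 2 : ℂ) / 2) * Complex.exp (-Complex.I * (y 2 : ℂ) / 2)) := by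
      funext y
      have h := congrFun (hwB 1 y) 0
      rw [h, (hwA y).2]; simp; ring
    rw [e]
    exact SMaux_key (fun t : ℝ => ((Real.sin (t / 2) : ℝ) : ℂ))
      (fun t : ℝ => Complex.exp (-Complex.I * (t : ℂ) / 2) * Complex.exp (-Complex.I * (t : ℂ) / 2))
      _ _ x hAs (hEd.mul hEd) v
  have dB11 : ∀ v : Fin 3 → ℝ, fderiv ℝ (fun y : Fin 3 → ℝ => wB 1 y 1) x v
      = (v 1 : ℂ) * (-↑(-Real.sin (x 1 / 2) * (1 / 2))
            * (Complex.exp (-Complex.I * (x 2 : ℂ) / 2) * Complex.exp (Complex.I * (x 2 : ℂ) / 2)))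
        + (v 2 : ℂ) * ((Complex.exp (-Complex.I * (x 2 : ℂ) / 2) * (-Complex.I / 2)
              * Complex.exp (Complex.I * (x 2 : ℂ) / 2)
            + Complex.exp (-Complex.I * (x 2 : ℂ) / 2)
              * (Complex.exp (Complex.I * (x 2 : ℂ) / 2) * (Complex.I / 2)))
            * -↑(Real.cos (x 1 / 2))) := by
    intro v
    have e : (fun y : Fin 3 → ℝ => wB 1 y 1)
        = fun y : Fin 3 → ℝ => (-((Real.cos (y 1 / 2) : ℝ) : ℂ))
            * (Complex.exp (-Complex.I * (y 2 : ℂ) / 2) * Complex.exp (Complex.I * (y 2 : ℂ) / 2)) := by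
      funext y
      have h := congrFun (hwB 1 y) 1
      rw [h, (hwA y).2]; simp; ring
    rw [e]
    exact SMaux_key (fun t : ℝ => -((Real.cos (t / 2) : ℝ) : ℂ))
      (fun t : ℝ => Complex.exp (-Complex.I * (t : ℂ) / 2) * Complex.exp (Complex.I * (t : ℂ) / 2))
      _ _ x hAc.neg (hEd.mul hFd) v
  have hEF : Complex.exp (-Complex.I * (x 2 : ℂ) / 2) * Complex.exp (Complex.I * (x 2 : ℂ) / 2) = 1 := by
    rw [← Complex.exp_add, show -Complex.I * (x 2 : ℂ) / 2 + Complex.I * (x 2 : ℂ) / 2 = 0 by ring,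
      Complex.exp_zero]
  have hsc : ((Real.sin (x 1 / 2) : ℂ)) ^ 2 + ((Real.cos (x 1 / 2) : ℂ)) ^ 2 = 1 := by
    exact_mod_cast congrArg (fun t : ℝ => (t : ℂ)) (Real.sin_sq_add_cos_sq (x 1 / 2))
  have TA : ∀ v : Fin 3 → ℝ,
      (starRingEnd ℂ) (fderiv ℝ (fun y : Fin 3 → ℝ => wA 0 y 0) x v) * wA 1 x 0
        + (starRingEnd ℂ) (fderiv ℝ (fun y : Fin 3 → ℝ => wA 0 y 1) x v) * wA 1 x 1
      = ((v 1 * (-(1/2) : ℝ) : ℝ) : ℂ)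
        + ((v 2 * (Real.cos (x 1 / 2) * Real.sin (x 1 / 2)) : ℝ) : ℂ) * Complex.I := by
    intro v
    rw [dA00 v, dA01 v, (hwA x).2]
    simp only [Matrix.cons_val_zero, Matrix.cons_val_one, Matrix.head_cons, map_add, map_mul,
      map_neg, map_div₀, map_ofNat, Complex.conj_ofReal, Complex.conj_I, neg_neg, ← Complex.exp_conj]
    linear_combination (norm := (push_cast; ring1))
      (-((v 1 : ℝ) : ℂ)/2 * ((Real.sin (x 1 / 2) : ℂ)^2 + (Real.cos (x 1 / 2) : ℂ)^2)
        + ((v 2 : ℝ) : ℂ) * Complex.I * (Real.sin (x 1 / 2) : ℂ) * (Real.cos (x 1 / 2) : ℂ)) * hEF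
      + (-((v 1 : ℝ) : ℂ)/2) * hsc
  have UA : ∀ v : Fin 3 → ℝ,
      (starRingEnd ℂ) (wA 1 x 0) * fderiv ℝ (fun y : Fin 3 → ℝ => wA 0 y 0) x v
        + (starRingEnd ℂ) (wA 1 x 1) * fderiv ℝ (fun y : Fin 3 → ℝ => wA 0 y 1) x v
      = ((v 1 * (-(1/2) : ℝ) : ℝ) : ℂ) + ((v 2 * (-(Real.cos (x 1 / 2) * Real.sin (x 1 / 2))) : ℝ) : ℂ) * Complex.I := by
    intro v
    rw [dA00 v, dA01 v, (hwA x).2]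
    simp only [Matrix.cons_val_zero, Matrix.cons_val_one, Matrix.head_cons, map_add, map_mul,
      map_neg, map_div₀, map_ofNat, Complex.conj_ofReal, Complex.conj_I, neg_neg, ← Complex.exp_conj]
    linear_combination (norm := (push_cast; ring1))
      (-((v 1 : ℝ) : ℂ)/2 * ((Real.sin (x 1 / 2) : ℂ)^2 + (Real.cos (x 1 / 2) : ℂ)^2) - ((v 2 : ℝ) : ℂ) * Complex.I * (Real.sin (x 1 / 2) : ℂ) * (Real.cos (x 1 / 2) : ℂ)) * hEF
      + (-((v 1 : ℝ) : ℂ)/2) * hsc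
  have SA0 : ∀ v : Fin 3 → ℝ,
      (starRingEnd ℂ) (fderiv ℝ (fun y : Fin 3 → ℝ => wA 0 y 0) x v) * wA 0 x 0
        + (starRingEnd ℂ) (fderiv ℝ (fun y : Fin 3 → ℝ => wA 0 y 1) x v) * wA 0 x 1
      = ((v 2 * ((Real.cos (x 1 / 2)^2 - Real.sin (x 1 / 2)^2)/2) : ℝ) : ℂ) * Complex.I := by
    intro v
    rw [dA00 v, dA01 v, (hwA x).1]
    simp only [Matrix.cons_val_zero, Matrix.cons_val_one, Matrix.head_cons, map_add, map_mul,
      map_neg, map_div₀, map_ofNat, Complex.conj_ofReal, Complex.conj_I, neg_neg, ← Complex.exp_conj]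
    linear_combination (norm := (push_cast; ring1))
      (((v 2 : ℝ) : ℂ) * (Complex.I/2) * ((Real.cos (x 1 / 2) : ℂ)^2 - (Real.sin (x 1 / 2) : ℂ)^2)) * hEF
  have SA0' : ∀ v : Fin 3 → ℝ,
      (starRingEnd ℂ) (wA 0 x 0) * fderiv ℝ (fun y : Fin 3 → ℝ => wA 0 y 0) x v
        + (starRingEnd ℂ) (wA 0 x 1) * fderiv ℝ (fun y : Fin 3 → ℝ => wA 0 y 1) x v
      = ((v 2 * (-((Real.cos (x 1 / 2)^2 - Real.sin (x 1 / 2)^2)/2)) : ℝ) : ℂ) * Complex.I := by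
    intro v
    rw [dA00 v, dA01 v, (hwA x).1]
    simp only [Matrix.cons_val_zero, Matrix.cons_val_one, Matrix.head_cons, map_add, map_mul,
      map_neg, map_div₀, map_ofNat, Complex.conj_ofReal, Complex.conj_I, neg_neg, ← Complex.exp_conj]
    linear_combination (norm := (push_cast; ring1))
      (-((v 2 : ℝ) : ℂ) * (Complex.I/2) * ((Real.cos (x 1 / 2) : ℂ)^2 - (Real.sin (x 1 / 2) : ℂ)^2)) * hEF
  have SA1 : ∀ v : Fin 3 → ℝ,
      (starRingEnd ℂ) (fderiv ℝ (fun y : Fin 3 → ℝ => wA 1 y 0) x v) * wA 1 x 0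
        + (starRingEnd ℂ) (fderiv ℝ (fun y : Fin 3 → ℝ => wA 1 y 1) x v) * wA 1 x 1
      = ((v 2 * (-((Real.cos (x 1 / 2)^2 - Real.sin (x 1 / 2)^2)/2)) : ℝ) : ℂ) * Complex.I := by
    intro v
    rw [dA10 v, dA11 v, (hwA x).2]
    simp only [Matrix.cons_val_zero, Matrix.cons_val_one, Matrix.head_cons, map_add, map_mul,
      map_neg, map_div₀, map_ofNat, Complex.conj_ofReal, Complex.conj_I, neg_neg, ← Complex.exp_conj]
    linear_combination (norm := (push_cast; ring1))
      (((v 2 : ℝ) : ℂ) * (Complex.I/2) * ((Real.sin (x 1 / 2) : ℂ)^2 - (Real.cos (x 1 / 2) : ℂ)^2)) * hEF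
  have SA1' : ∀ v : Fin 3 → ℝ,
      (starRingEnd ℂ) (wA 1 x 0) * fderiv ℝ (fun y : Fin 3 → ℝ => wA 1 y 0) x v
        + (starRingEnd ℂ) (wA 1 x 1) * fderiv ℝ (fun y : Fin 3 → ℝ => wA 1 y 1) x v
      = ((v 2 * ((Real.cos (x 1 / 2)^2 - Real.sin (x 1 / 2)^2)/2) : ℝ) : ℂ) * Complex.I := by
    intro v
    rw [dA10 v, dA11 v, (hwA x).2]
    simp only [Matrix.cons_val_zero, Matrix.cons_val_one, Matrix.head_cons, map_add, map_mul,
      map_neg, map_div₀, map_ofNat, Complex.conj_ofReal, Complex.conj_I, neg_neg, ← Complex.exp_conj]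
    linear_combination (norm := (push_cast; ring1))
      (((v 2 : ℝ) : ℂ) * (Complex.I/2) * ((Real.cos (x 1 / 2) : ℂ)^2 - (Real.sin (x 1 / 2) : ℂ)^2)) * hEF
  have TB : ∀ v : Fin 3 → ℝ,
      (starRingEnd ℂ) (fderiv ℝ (fun y : Fin 3 → ℝ => wB 0 y 0) x v) * wB 1 x 0
        + (starRingEnd ℂ) (fderiv ℝ (fun y : Fin 3 → ℝ => wB 0 y 1) x v) * wB 1 x 1
      = ((v 1 * (-(1/2) : ℝ) : ℝ) : ℂ) + ((v 2 * (Real.cos (x 1 / 2) * Real.sin (x 1 / 2)) : ℝ) : ℂ) * Complex.I := by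
    intro v
    rw [dB00 v, dB01 v, hwB 1 x, (hwA x).2]
    simp only [Matrix.cons_val_zero, Matrix.cons_val_one, Matrix.head_cons, map_add, map_mul,
      map_neg, map_div₀, map_ofNat, Complex.conj_ofReal, Complex.conj_I, neg_neg, ← Complex.exp_conj]
    linear_combination (norm := (push_cast; ring1))
      ((-((v 1 : ℝ) : ℂ)/2 * ((Real.sin (x 1 / 2) : ℂ)^2 + (Real.cos (x 1 / 2) : ℂ)^2) + ((v 2 : ℝ) : ℂ) * Complex.I * (Real.sin (x 1 / 2) : ℂ) * (Real.cos (x 1 / 2) : ℂ)) * (Complex.exp (-Complex.I * (x 2 : ℂ) / 2) * Complex.exp (Complex.I * (x 2 : ℂ) / 2) + 1)) * hEF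
      + (-((v 1 : ℝ) : ℂ)/2) * hsc
  have UB : ∀ v : Fin 3 → ℝ,
      (starRingEnd ℂ) (wB 1 x 0) * fderiv ℝ (fun y : Fin 3 → ℝ => wB 0 y 0) x v
        + (starRingEnd ℂ) (wB 1 x 1) * fderiv ℝ (fun y : Fin 3 → ℝ => wB 0 y 1) x v
      = ((v 1 * (-(1/2) : ℝ) : ℝ) : ℂ) + ((v 2 * (-(Real.cos (x 1 / 2) * Real.sin (x 1 / 2))) : ℝ) : ℂ) * Complex.I := by
    intro v
    rw [dB00 v, dB01 v, hwB 1 x, (hwA x).2]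
    simp only [Matrix.cons_val_zero, Matrix.cons_val_one, Matrix.head_cons, map_add, map_mul,
      map_neg, map_div₀, map_ofNat, Complex.conj_ofReal, Complex.conj_I, neg_neg, ← Complex.exp_conj]
    linear_combination (norm := (push_cast; ring1))
      ((-((v 1 : ℝ) : ℂ)/2 * ((Real.sin (x 1 / 2) : ℂ)^2 + (Real.cos (x 1 / 2) : ℂ)^2) - ((v 2 : ℝ) : ℂ) * Complex.I * (Real.sin (x 1 / 2) : ℂ) * (Real.cos (x 1 / 2) : ℂ)) * (Complex.exp (-Complex.I * (x 2 : ℂ) / 2) * Complex.exp (Complex.I * (x 2 : ℂ) / 2) + 1)) * hEF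
      + (-((v 1 : ℝ) : ℂ)/2) * hsc
  have SB0 : ∀ v : Fin 3 → ℝ,
      (starRingEnd ℂ) (fderiv ℝ (fun y : Fin 3 → ℝ => wB 0 y 0) x v) * wB 0 x 0
        + (starRingEnd ℂ) (fderiv ℝ (fun y : Fin 3 → ℝ => wB 0 y 1) x v) * wB 0 x 1
      = ((v 2 * Real.cos (x 1 / 2)^2 : ℝ) : ℂ) * Complex.I := by
    intro v
    rw [dB00 v, dB01 v, hwB 0 x, (hwA x).1]
    simp only [Matrix.cons_val_zero, Matrix.cons_val_one, Matrix.head_cons, map_add, map_mul,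
      map_neg, map_div₀, map_ofNat, Complex.conj_ofReal, Complex.conj_I, neg_neg, ← Complex.exp_conj]
    linear_combination (norm := (push_cast; ring1))
      (((v 2 : ℝ) : ℂ) * Complex.I * (Real.cos (x 1 / 2) : ℂ)^2 * (Complex.exp (-Complex.I * (x 2 : ℂ) / 2) * Complex.exp (Complex.I * (x 2 : ℂ) / 2) + 1)) * hEF
  have SB0' : ∀ v : Fin 3 → ℝ,
      (starRingEnd ℂ) (wB 0 x 0) * fderiv ℝ (fun y : Fin 3 → ℝ => wB 0 y 0) x v
        + (starRingEnd ℂ) (wB 0 x 1) * fderiv ℝ (fun y : Fin 3 → ℝ => wB 0 y 1) x v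
      = ((v 2 * (-(Real.cos (x 1 / 2)^2)) : ℝ) : ℂ) * Complex.I := by
    intro v
    rw [dB00 v, dB01 v, hwB 0 x, (hwA x).1]
    simp only [Matrix.cons_val_zero, Matrix.cons_val_one, Matrix.head_cons, map_add, map_mul,
      map_neg, map_div₀, map_ofNat, Complex.conj_ofReal, Complex.conj_I, neg_neg, ← Complex.exp_conj]
    linear_combination (norm := (push_cast; ring1))
      (-((v 2 : ℝ) : ℂ) * Complex.I * (Real.cos (x 1 / 2) : ℂ)^2 * (Complex.exp (-Complex.I * (x 2 : ℂ) / 2) * Complex.exp (Complex.I * (x 2 : ℂ) / 2) + 1)) * hEF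
  have SB1 : ∀ v : Fin 3 → ℝ,
      (starRingEnd ℂ) (fderiv ℝ (fun y : Fin 3 → ℝ => wB 1 y 0) x v) * wB 1 x 0
        + (starRingEnd ℂ) (fderiv ℝ (fun y : Fin 3 → ℝ => wB 1 y 1) x v) * wB 1 x 1
      = ((v 2 * Real.sin (x 1 / 2)^2 : ℝ) : ℂ) * Complex.I := by
    intro v
    rw [dB10 v, dB11 v, hwB 1 x, (hwA x).2]
    simp only [Matrix.cons_val_zero, Matrix.cons_val_one, Matrix.head_cons, map_add, map_mul,
      map_neg, map_div₀, map_ofNat, Complex.conj_ofReal, Complex.conj_I, neg_neg, ← Complex.exp_conj]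
    linear_combination (norm := (push_cast; ring1))
      (((v 2 : ℝ) : ℂ) * Complex.I * (Real.sin (x 1 / 2) : ℂ)^2 * (Complex.exp (-Complex.I * (x 2 : ℂ) / 2) * Complex.exp (Complex.I * (x 2 : ℂ) / 2) + 1)) * hEF
  have SB1' : ∀ v : Fin 3 → ℝ,
      (starRingEnd ℂ) (wB 1 x 0) * fderiv ℝ (fun y : Fin 3 → ℝ => wB 1 y 0) x v
        + (starRingEnd ℂ) (wB 1 x 1) * fderiv ℝ (fun y : Fin 3 → ℝ => wB 1 y 1) x v
      = ((v 2 * (-(Real.sin (x 1 / 2)^2)) : ℝ) : ℂ) * Complex.I := by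
    intro v
    rw [dB10 v, dB11 v, hwB 1 x, (hwA x).2]
    simp only [Matrix.cons_val_zero, Matrix.cons_val_one, Matrix.head_cons, map_add, map_mul,
      map_neg, map_div₀, map_ofNat, Complex.conj_ofReal, Complex.conj_I, neg_neg, ← Complex.exp_conj]
    linear_combination (norm := (push_cast; ring1))
      (-((v 2 : ℝ) : ℂ) * Complex.I * (Real.sin (x 1 / 2) : ℂ)^2 * (Complex.exp (-Complex.I * (x 2 : ℂ) / 2) * Complex.exp (Complex.I * (x 2 : ℂ) / 2) + 1)) * hEF
  have hp0 : p 0 = fun y : Fin 3 → ℝ => (1 + y 0) / 2 := funext fun y => (hp y).1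
  have hp1 : p 1 = fun y : Fin 3 → ℝ => (1 - y 0) / 2 := funext fun y => (hp y).2
  have hP : Real.sin (x 1 / 2)^2 + Real.cos (x 1 / 2)^2 = 1 := Real.sin_sq_add_cos_sq _
  have hC2 : Real.cos (x 1) = 2 * Real.cos (x 1 / 2)^2 - 1 := by
    have h := Real.cos_two_mul (x 1 / 2)
    rw [show 2 * (x 1 / 2) = x 1 by ring] at h
    exact h
  have hne1 : (1:ℝ) + x 0 ≠ 0 := by linarith
  have hne2 : (1:ℝ) - x 0 ≠ 0 := by linarith
  have hne3 : (1:ℝ) - x 0 ^ 2 ≠ 0 := by nlinarith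
  simp only [CU, pd]
  have f2 : (⟨2, by norm_num⟩ : Fin 3) = 2 := rfl
  refine ⟨fun k l => ?_, fun k l => ?_⟩ <;> fin_cases k <;> fin_cases l <;>
    simp only [Fin.sum_univ_two] <;>
    rw [if_neg (show ¬ ((0:Fin 2) < 0) by decide), if_pos (show (0:Fin 2) < 1 by decide),
      if_neg (show ¬ ((1:Fin 2) < 0) by decide), if_neg (show ¬ ((1:Fin 2) < 1) by decide)] <;>
    simp only [TA, UA, SA0, SA0', SA1, SA1', TB, UB, SB0, SB0', SB1, SB1',
      hp0, hp1, SMaux_dp_plus, SMaux_dp_minus] <;>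
    simp (config := { decide := true }) only [Pi.single_apply,
      Matrix.cons_val_zero, Matrix.cons_val_one, Matrix.cons_val_two,
      Matrix.head_cons, Matrix.tail_cons, if_true, if_false, Fin.mk_zero, Fin.mk_one, f2,
      Complex.zero_re, Complex.zero_im,
      Complex.add_re, Complex.add_im, Complex.mul_re, Complex.mul_im,
      Complex.I_re, Complex.I_im, Complex.ofReal_re, Complex.ofReal_im] <;>
    first
      | ring1
      | (field_simp; ring1)
      | linear_combination (Real.sin (x 1 / 2)^2 + Real.cos (x 1 / 2)^2 + 1) * hP
      | linear_combination ((2 - 2*x 0) * Real.sin (x 1 / 2)^2 + (2 - 2*x 0)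
            + (2 + 2*x 0) * Real.cos (x 1 / 2)^2) * hP + (-(2*x 0)) * hC2
end

section
/- Let ρ(θ) (θ ∈ ℝ^p) be a smooth multi-parameter family of density matrices with spectral decomposition ρ(θ) = Σ_k p_k(θ)|w_k(θ)⟩⟨w_k(θ)|, p_k > 0. Then the matrix C_Υ(θ) − C_L(θ), whose (m,n) entry is 4 Re Σ_i p_i ⟨w_i^{(m)}|w_i⟩⟨w_i|w_i^{(n)}⟩, is positive semidefinite; hence C_L(θ) ≤ C_Υ(θ) in the Loewner order. -/
open scoped BigOperators

/-- For a smooth multi-parameter family of density matrices with spectral decomposition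
`ρ(θ) = Σ_k p_k(θ)|w_k(θ)⟩⟨w_k(θ)|`, `p_k > 0`, the matrix `C_Υ(θ) − C_L(θ)` with
entries `4 Re Σ_i p_i ⟨w_i^{(m)}|w_i⟩⟨w_i|w_i^{(n)}⟩` is positive semidefinite;
hence `C_L(θ) ≤ C_Υ(θ)` in the Loewner order. -/
theorem CUpsilon_sub_CL_posSemidef_multi
    {d q : ℕ} (p : Fin d → (Fin q → ℝ) → ℝ)
    (w : Fin d → (Fin q → ℝ) → EuclideanSpace ℂ (Fin d))
    (hp : ∀ i x, 0 < p i x)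
    (hpd : ∀ i, Differentiable ℝ (p i))
    (hwd : ∀ i, Differentiable ℝ (w i))
    (hON : ∀ x, Orthonormal ℂ (fun i => w i x)) :
    ∀ x : Fin q → ℝ,
      (Matrix.of (fun m n : Fin q =>
        4 * (∑ i, (p i x : ℂ) *
          ((inner ℂ (fderiv ℝ (w i) x (Pi.single m 1)) (w i x) : ℂ)
            * (inner ℂ (w i x) (fderiv ℝ (w i) x (Pi.single n 1)) : ℂ))).re)).PosSemidef := by
  intro x
  set z : Fin q → Fin d → ℂ := fun m i =>
    (inner ℂ (fderiv ℝ (w i) x (Pi.single m 1)) (w i x) : ℂ) with hz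
  -- purely imaginary
  have hre : ∀ m i, (z m i).re = 0 := by
    intro m i
    have h1 : HasFDerivAt (w i) (fderiv ℝ (w i) x) x := (hwd i x).hasFDerivAt
    have h2 := h1.inner ℂ h1
    have hconst : (fun y => (inner ℂ (w i y) (w i y) : ℂ)) = fun _ => (1 : ℂ) := by
      funext y
      have hn : ‖w i y‖ = 1 := (hON y).1 i
      rw [inner_self_eq_norm_sq_to_K (𝕜 := ℂ) (w i y), hn]
      norm_num
    rw [hconst] at h2
    have h3 := h2.unique (hasFDerivAt_const (1 : ℂ) x)
    have h4 := congrFun (congrArg DFunLike.coe h3) (Pi.single m 1)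
    rw [ContinuousLinearMap.comp_apply, ContinuousLinearMap.prod_apply,
      fderivInnerCLM_apply, ContinuousLinearMap.zero_apply] at h4
    have h5 : (inner ℂ (w i x) (fderiv ℝ (w i) x (Pi.single m 1)) : ℂ)
        = starRingEnd ℂ (z m i) := by
      rw [hz]; exact (inner_conj_symm _ _).symm
    rw [h5] at h4
    have h6 := congrArg Complex.re h4
    simp only [Complex.add_re, Complex.conj_re, Complex.zero_re] at h6
    linarith
  -- entry formula
  have hconj : ∀ n i, (inner ℂ (w i x) (fderiv ℝ (w i) x (Pi.single n 1)) : ℂ)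
      = starRingEnd ℂ (z n i) := by
    intro n i; rw [hz]; exact (inner_conj_symm _ _).symm
  have key : ∀ m n : Fin q,
      (4 * (∑ i, (p i x : ℂ) *
        ((inner ℂ (fderiv ℝ (w i) x (Pi.single m 1)) (w i x) : ℂ)
          * (inner ℂ (w i x) (fderiv ℝ (w i) x (Pi.single n 1)) : ℂ))).re)
      = 4 * ∑ i, p i x * ((z m i).im * (z n i).im) := by
    intro m n
    congr 1
    rw [Complex.re_sum]
    refine Finset.sum_congr rfl fun i _ => ?_
    rw [hconj]
    have hzz : ((inner ℂ (fderiv ℝ (w i) x (Pi.single m 1)) (w i x) : ℂ)) = z m i := rfl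
    rw [hzz]
    simp [Complex.mul_re, Complex.mul_im, hre, Complex.conj_re, Complex.conj_im]
  rw [Matrix.posSemidef_iff_dotProduct_mulVec]
  constructor
  · ext m n
    simp only [Matrix.conjTranspose_apply, Matrix.of_apply, star_trivial]
    rw [key m n, key n m]
    congr 1
    exact Finset.sum_congr rfl fun i _ => by ring
  · intro v
    have hv : star v = v := by funext m; exact star_trivial _
    rw [hv]
    have quad : dotProduct v ((Matrix.of (fun m n : Fin q =>
        4 * (∑ i, (p i x : ℂ) *
          ((inner ℂ (fderiv ℝ (w i) x (Pi.single m 1)) (w i x) : ℂ)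
            * (inner ℂ (w i x) (fderiv ℝ (w i) x (Pi.single n 1)) : ℂ))).re)).mulVec v)
        = 4 * ∑ i, p i x * (∑ m, v m * (z m i).im) ^ 2 := by
      simp only [dotProduct, Matrix.mulVec, Matrix.of_apply]
      calc ∑ m, v m * ∑ n, (4 * (∑ i, (p i x : ℂ) *
          ((inner ℂ (fderiv ℝ (w i) x (Pi.single m 1)) (w i x) : ℂ)
            * (inner ℂ (w i x) (fderiv ℝ (w i) x (Pi.single n 1)) : ℂ))).re) * v n
          = ∑ m, ∑ n, ∑ i, 4 * (p i x * ((v m * (z m i).im) * (v n * (z n i).im))) := by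
            refine Finset.sum_congr rfl fun m _ => ?_
            rw [Finset.mul_sum]
            refine Finset.sum_congr rfl fun n _ => ?_
            rw [key m n]
            simp only [Finset.mul_sum, Finset.sum_mul]
            exact Finset.sum_congr rfl fun i _ => by ring
        _ = ∑ i, ∑ m, ∑ n, 4 * (p i x * ((v m * (z m i).im) * (v n * (z n i).im))) := by
            rw [show (∑ m, ∑ n, ∑ i, 4 * (p i x * ((v m * (z m i).im) * (v n * (z n i).im))))
                = ∑ m, ∑ i, ∑ n : Fin q, 4 * (p i x * ((v m * (z m i).im) * (v n * (z n i).im)))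
              from Finset.sum_congr rfl fun m _ => by rw [Finset.sum_comm]]
            rw [Finset.sum_comm]
        _ = 4 * ∑ i, p i x * (∑ m, v m * (z m i).im) ^ 2 := by
            rw [Finset.mul_sum]
            refine Finset.sum_congr rfl fun i _ => ?_
            simp only [sq, Finset.sum_mul, Finset.mul_sum]
            exact Finset.sum_congr rfl fun m _ => Finset.sum_congr rfl fun n _ => by ring
    rw [quad]
    refine mul_nonneg (by norm_num) (Finset.sum_nonneg fun i _ =>
      mul_nonneg (hp i x).le (sq_nonneg _))
end

section
/- Let ρ(θ) (θ ∈ ℝ^p) be a smooth multi-parameter family of density matrices with spectral decomposition ρ(θ) = Σ_k p_k(θ)|w_k(θ)⟩⟨w_k(θ)|, p_k > 0. Then the matrix difference C_L(θ) − H_{SLD}(θ), whose quadratic form at v ∈ ℝ^p is 16 Σ_{j<k} (p_j p_k)/(p_j + p_k) |Σ_m v^m ⟨w_j^{(m)}|w_k⟩|^2, is positive semidefinite; hence H_{SLD}(θ) ≤ C_L(θ) in the Loewner order, with equality iff ⟨w_j^{(m)}|w_k⟩ = 0 for all m and all j ≠ k with p_j, p_k > 0. -/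
open scoped BigOperators

lemma sum_comm4 {α β γ δ M : Type*} [Fintype α] [Fintype β] [Fintype γ] [Fintype δ]
    [AddCommMonoid M] (F : α → β → γ → δ → M) :
    (∑ k, ∑ l, ∑ i, ∑ j, F k l i j) = ∑ i, ∑ j, ∑ k, ∑ l, F k l i j :=
  calc (∑ k, ∑ l, ∑ i, ∑ j, F k l i j)
      = ∑ k, ∑ i, ∑ l, ∑ j, F k l i j := Finset.sum_congr rfl fun _ _ => Finset.sum_comm
    _ = ∑ i, ∑ k, ∑ l, ∑ j, F k l i j := Finset.sum_comm
    _ = ∑ i, ∑ k, ∑ j, ∑ l, F k l i j :=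
        Finset.sum_congr rfl fun _ _ => Finset.sum_congr rfl fun _ _ => Finset.sum_comm
    _ = ∑ i, ∑ j, ∑ k, ∑ l, F k l i j := Finset.sum_congr rfl fun _ _ => Finset.sum_comm

lemma key_abs {q : ℕ} (b : Fin q → ℂ) (v : Fin q → ℝ) :
    ∑ k, ∑ l, v k * ((b k * (starRingEnd ℂ) (b l)).re * v l)
      = ‖∑ m, (v m : ℂ) * b m‖ ^ 2 := by
  rw [Complex.sq_norm]
  have h : Complex.normSq (∑ m, (v m : ℂ) * b m)
      = ((∑ m, (v m : ℂ) * b m) * (starRingEnd ℂ) (∑ m, (v m : ℂ) * b m)).re := by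
    rw [Complex.mul_conj, Complex.ofReal_re]
  rw [h, map_sum, Finset.sum_mul_sum, Complex.re_sum]
  refine Finset.sum_congr rfl fun k _ => ?_
  rw [Complex.re_sum]
  refine Finset.sum_congr rfl fun l _ => ?_
  have : (v k : ℂ) * b k * (starRingEnd ℂ) ((v l : ℂ) * b l)
      = ((v k * v l : ℝ) : ℂ) * (b k * (starRingEnd ℂ) (b l)) := by
    rw [map_mul, Complex.conj_ofReal]; push_cast; ring
  rw [this, Complex.re_ofReal_mul]; ring

/-- For a smooth multi-parameter family of density matrices with spectral decomposition
`ρ(θ) = Σ_k p_k(θ)|w_k(θ)⟩⟨w_k(θ)|`, `p_k > 0`, the matrix `C_L(θ) − H_{SLD}(θ)` has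
quadratic form `16 Σ_{j<k} p_j p_k/(p_j+p_k) |Σ_m vᵐ ⟨w_j^{(m)}|w_k⟩|²` at `v ∈ ℝᵖ`, is
positive semidefinite (so `H_{SLD}(θ) ≤ C_L(θ)` in the Loewner order), and equals zero
iff `⟨w_j^{(m)}|w_k⟩ = 0` for all `m` and all `j ≠ k`. -/
theorem HSLD_le_CL_multi
    {d q : ℕ} (p : Fin d → (Fin q → ℝ) → ℝ)
    (w : Fin d → (Fin q → ℝ) → EuclideanSpace ℂ (Fin d))
    (hp : ∀ i x, 0 < p i x)
    (hpd : ∀ i, Differentiable ℝ (p i))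
    (hwd : ∀ i, Differentiable ℝ (w i))
    (hON : ∀ x, Orthonormal ℂ (fun i => w i x)) :
    ∀ x : Fin q → ℝ,
      let pd : Fin q → Fin d → EuclideanSpace ℂ (Fin d) :=
        fun m i => fderiv ℝ (w i) x (Pi.single m 1)
      let H : Matrix (Fin q) (Fin q) ℝ := Matrix.of fun k l =>
        (∑ i, (fderiv ℝ (p i) x (Pi.single k 1)) * (fderiv ℝ (p i) x (Pi.single l 1))
            / p i x)
        + 4 * (∑ i, ∑ j, if i < j then
            (((p i x - p j x) ^ 2 / (p i x + p j x) : ℝ) : ℂ) *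
              ((inner ℂ (pd k i) (w j x) : ℂ) * (inner ℂ (w j x) (pd l i) : ℂ))
          else 0).re
      let CL : Matrix (Fin q) (Fin q) ℝ := Matrix.of fun k l =>
        (∑ i, (fderiv ℝ (p i) x (Pi.single k 1)) * (fderiv ℝ (p i) x (Pi.single l 1))
            / p i x)
        + 4 * (∑ i, ∑ j, if i < j then
            ((p i x + p j x : ℝ) : ℂ) *
              ((inner ℂ (pd k i) (w j x) : ℂ) * (inner ℂ (w j x) (pd l i) : ℂ))
          else 0).re
      (∀ v : Fin q → ℝ,
        dotProduct v ((CL - H).mulVec v)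
          = 16 * ∑ j, ∑ k, if j < k then
              (p j x * p k x / (p j x + p k x)) *
                ‖∑ m, (v m : ℂ) * (inner ℂ (pd m j) (w k x) : ℂ)‖ ^ 2
            else 0) ∧
      (CL - H).PosSemidef ∧
      (CL = H ↔ ∀ (m : Fin q) (j k : Fin d), j ≠ k →
        (inner ℂ (pd m j) (w k x) : ℂ) = 0) := by
  intro x pd H CL
  have hne : ∀ i j : Fin d, p i x + p j x ≠ 0 :=
    fun i j => ne_of_gt (add_pos (hp i x) (hp j x))
  -- a push lemma : take real part through the double sum
  have push : ∀ (c : Fin d → Fin d → ℝ) (k l : Fin q),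
      (∑ i, ∑ j, if i < j then ((c i j : ℝ) : ℂ) *
          ((inner ℂ (pd k i) (w j x) : ℂ) * (inner ℂ (w j x) (pd l i) : ℂ)) else 0).re
      = ∑ i, ∑ j, if i < j then c i j *
          ((inner ℂ (pd k i) (w j x) : ℂ) *
            (starRingEnd ℂ) (inner ℂ (pd l i) (w j x) : ℂ)).re else 0 := by
    intro c k l
    rw [Complex.re_sum]
    refine Finset.sum_congr rfl fun i _ => ?_
    rw [Complex.re_sum]
    refine Finset.sum_congr rfl fun j _ => ?_
    split
    · rw [← inner_conj_symm (𝕜 := ℂ) (w j x) (pd l i), Complex.re_ofReal_mul]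
    · simp
  -- entrywise formula for CL - H
  have hE : ∀ k l : Fin q, CL k l - H k l = ∑ i, ∑ j, if i < j then
      16 * (p i x * p j x / (p i x + p j x)) *
        ((inner ℂ (pd k i) (w j x) : ℂ) *
          (starRingEnd ℂ) (inner ℂ (pd l i) (w j x) : ℂ)).re else 0 := by
    intro k l
    show ((∑ i, (fderiv ℝ (p i) x (Pi.single k 1)) * (fderiv ℝ (p i) x (Pi.single l 1))
            / p i x)
        + 4 * (∑ i, ∑ j, if i < j then
            ((p i x + p j x : ℝ) : ℂ) *
              ((inner ℂ (pd k i) (w j x) : ℂ) * (inner ℂ (w j x) (pd l i) : ℂ))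
          else 0).re)
      - ((∑ i, (fderiv ℝ (p i) x (Pi.single k 1)) * (fderiv ℝ (p i) x (Pi.single l 1))
            / p i x)
        + 4 * (∑ i, ∑ j, if i < j then
            (((p i x - p j x) ^ 2 / (p i x + p j x) : ℝ) : ℂ) *
              ((inner ℂ (pd k i) (w j x) : ℂ) * (inner ℂ (w j x) (pd l i) : ℂ))
          else 0).re) = _
    rw [push (fun i j => p i x + p j x) k l,
        push (fun i j => (p i x - p j x) ^ 2 / (p i x + p j x)) k l]
    rw [add_sub_add_left_eq_sub, Finset.mul_sum, Finset.mul_sum, ← Finset.sum_sub_distrib]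
    refine Finset.sum_congr rfl fun i _ => ?_
    rw [Finset.mul_sum, Finset.mul_sum, ← Finset.sum_sub_distrib]
    refine Finset.sum_congr rfl fun j _ => ?_
    split
    · generalize ((inner ℂ (pd k i) (w j x) : ℂ) *
        (starRingEnd ℂ) (inner ℂ (pd l i) (w j x) : ℂ)).re = e
      have h := hne i j
      field_simp
      ring
    · simp
  -- the quadratic form
  have hquad : ∀ v : Fin q → ℝ,
      dotProduct v ((CL - H).mulVec v)
        = 16 * ∑ j, ∑ k, if j < k then
            (p j x * p k x / (p j x + p k x)) *
              ‖∑ m, (v m : ℂ) * (inner ℂ (pd m j) (w k x) : ℂ)‖ ^ 2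
          else 0 := by
    intro v
    have h1 : dotProduct v ((CL - H).mulVec v)
        = ∑ k, ∑ l, v k * ((CL k l - H k l) * v l) := by
      simp [dotProduct, Matrix.mulVec, Matrix.sub_apply, Finset.mul_sum]
    rw [h1]
    simp only [hE]
    have h3 : ∀ k l : Fin q,
        v k * ((∑ i, ∑ j, if i < j then
          16 * (p i x * p j x / (p i x + p j x)) *
            ((inner ℂ (pd k i) (w j x) : ℂ) *
              (starRingEnd ℂ) (inner ℂ (pd l i) (w j x) : ℂ)).re else 0) * v l)
        = ∑ i, ∑ j, v k * ((if i < j then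
          16 * (p i x * p j x / (p i x + p j x)) *
            ((inner ℂ (pd k i) (w j x) : ℂ) *
              (starRingEnd ℂ) (inner ℂ (pd l i) (w j x) : ℂ)).re else 0) * v l) := by
      intro k l
      rw [Finset.sum_mul, Finset.mul_sum]
      refine Finset.sum_congr rfl fun i _ => ?_
      rw [Finset.sum_mul, Finset.mul_sum]
    simp only [h3]
    rw [sum_comm4, Finset.mul_sum]
    refine Finset.sum_congr rfl fun i _ => ?_
    rw [Finset.mul_sum]
    refine Finset.sum_congr rfl fun j _ => ?_
    by_cases hij : i < j
    · simp only [hij, if_true]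
      have h4 : ∀ k l : Fin q,
          v k * (16 * (p i x * p j x / (p i x + p j x)) *
            ((inner ℂ (pd k i) (w j x) : ℂ) *
              (starRingEnd ℂ) (inner ℂ (pd l i) (w j x) : ℂ)).re * v l)
          = (16 * (p i x * p j x / (p i x + p j x))) *
            (v k * (((inner ℂ (pd k i) (w j x) : ℂ) *
              (starRingEnd ℂ) (inner ℂ (pd l i) (w j x) : ℂ)).re * v l)) := by
        intro k l; ring
      simp only [h4, ← Finset.mul_sum]
      have hk := key_abs (fun m => (inner ℂ (pd m i) (w j x) : ℂ)) v
      beta_reduce at hk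
      simp only [← Finset.mul_sum] at hk
      rw [hk]
      ring
    · simp [hij]
  refine ⟨hquad, Matrix.posSemidef_iff_dotProduct_mulVec.mpr ⟨?_, ?_⟩, ?_, ?_⟩
  · -- Hermitian
    show Matrix.conjTranspose (CL - H) = CL - H
    ext k l
    rw [Matrix.conjTranspose_apply, star_trivial]
    show (CL l k - H l k) = (CL k l - H k l)
    rw [hE, hE]
    refine Finset.sum_congr rfl fun i _ => Finset.sum_congr rfl fun j _ => ?_
    split
    · congr 1
      have hsymm : ∀ z ζ : ℂ, (ζ * (starRingEnd ℂ) z).re = (z * (starRingEnd ℂ) ζ).re := by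
        intro z ζ
        simp only [Complex.mul_re, Complex.conj_re, Complex.conj_im]
        ring
      exact hsymm _ _
    · rfl
  · -- nonneg
    intro v
    have hsv : star v = v := by simp
    rw [hsv, hquad v]
    refine mul_nonneg (by norm_num) (Finset.sum_nonneg fun j _ =>
      Finset.sum_nonneg fun k _ => ?_)
    split
    · exact mul_nonneg (div_nonneg (mul_nonneg (hp j x).le (hp k x).le)
        (add_pos (hp j x) (hp k x)).le) (sq_nonneg _)
    · exact le_refl 0
  · -- forward direction of the iff
    intro hCLH
    -- derivative of orthonormality
    have hderiv : ∀ (m : Fin q) (j k : Fin d),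
        (inner ℂ (w j x) (pd m k) : ℂ) + (inner ℂ (pd m j) (w k x) : ℂ) = 0 := by
      intro m j k
      have hc : (fun y => (inner ℂ (w j y) (w k y) : ℂ))
          = fun _ => (if j = k then (1 : ℂ) else 0) := by
        funext y
        exact orthonormal_iff_ite.mp (hON y) j k
      have h0 : fderiv ℝ (fun y => (inner ℂ (w j y) (w k y) : ℂ)) x (Pi.single m 1) = 0 := by
        rw [hc]
        simp
      rw [fderiv_inner_apply ℂ ((hwd j) x) ((hwd k) x)] at h0
      exact h0
    have hlt : ∀ (m : Fin q) (i j : Fin d), i < j → (inner ℂ (pd m i) (w j x) : ℂ) = 0 := by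
      intro m i j hij
      have h := hE m m
      rw [hCLH, sub_self] at h
      have h' : ∑ i', ∑ j', (if i' < j' then
          16 * (p i' x * p j' x / (p i' x + p j' x)) *
            Complex.normSq (inner ℂ (pd m i') (w j' x) : ℂ) else 0) = 0 := by
        refine Eq.trans ?_ h.symm
        refine Finset.sum_congr rfl fun i' _ => Finset.sum_congr rfl fun j' _ => ?_
        split
        · rw [Complex.mul_conj, Complex.ofReal_re]
        · rfl
      have hnn : ∀ i' ∈ Finset.univ (α := Fin d), ∀ j' ∈ Finset.univ (α := Fin d),
          (0:ℝ) ≤ (if i' < j' then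
            16 * (p i' x * p j' x / (p i' x + p j' x)) *
              Complex.normSq (inner ℂ (pd m i') (w j' x) : ℂ) else 0) := by
        intro i' _ j' _
        split
        · exact mul_nonneg (mul_nonneg (by norm_num)
            (div_nonneg (mul_nonneg (hp i' x).le (hp j' x).le)
              (add_pos (hp i' x) (hp j' x)).le)) (Complex.normSq_nonneg _)
        · exact le_refl 0
      have hterm := (Finset.sum_eq_zero_iff_of_nonneg
        (fun i' hi' => Finset.sum_nonneg (hnn i' hi'))).mp h' i (Finset.mem_univ i)
      have hterm2 := (Finset.sum_eq_zero_iff_of_nonneg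
        (hnn i (Finset.mem_univ i))).mp hterm j (Finset.mem_univ j)
      rw [if_pos hij] at hterm2
      have hcpos : (0:ℝ) < 16 * (p i x * p j x / (p i x + p j x)) :=
        mul_pos (by norm_num)
          (div_pos (mul_pos (hp i x) (hp j x)) (add_pos (hp i x) (hp j x)))
      have := (mul_eq_zero.mp hterm2).resolve_left (ne_of_gt hcpos)
      exact Complex.normSq_eq_zero.mp this
    intro m j k hjk
    rcases lt_or_gt_of_ne hjk with hlt' | hgt
    · exact hlt m j k hlt'
    · have h1 := hderiv m j k
      have h2 : (inner ℂ (w j x) (pd m k) : ℂ) = 0 := by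
        rw [← inner_conj_symm (𝕜 := ℂ) (w j x) (pd m k), hlt m k j hgt, map_zero]
      rw [h2, zero_add] at h1
      exact h1
  · -- reverse direction of the iff
    intro hI
    ext k l
    have h := hE k l
    have h0 : CL k l - H k l = 0 := by
      rw [h]
      refine Finset.sum_eq_zero fun i _ => Finset.sum_eq_zero fun j _ => ?_
      split
      · rename_i hij
        rw [hI k i j (ne_of_lt hij)]
        simp
      · rfl
    linarith [h0]
end
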